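/- arXiv:1903.06736 — 7 statements merged into one kernel-verified Lean document; each statement's English description precedes it below -/
import Mathlib

section
/- Let (K,v) be a valued field, let μ be a valuation on K[x] extending v, and let φ ∈ K[x] be a non-constant polynomial. Then φ is μ-minimal if and only if for every f ∈ K[x], writing the canonical φ-expansion f = Σ_{s≥0} a_s φ^s (with deg a_s < deg φ for all s), one has μ(f) = min_{s≥0} μ(a_s φ^s). -/
open Polynomial

section Core

variable {K : Type*} [Field K] {Λ : Type*} [AddCommGroup Λ] [LinearOrder Λ] [IsOrderedAddMonoid Λ]

/-- A (Krull) valuation on a field `K`, written additively, with values in `Λ ∪ {∞}`. -/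
def IsVal (v : K → WithTop Λ) : Prop :=
  (∀ a b : K, v (a * b) = v a + v b) ∧
  (∀ a b : K, min (v a) (v b) ≤ v (a + b)) ∧
  (∀ a : K, v a = ⊤ ↔ a = 0)

/-- A valuation on `K[x]` extending the valuation `v` on `K`. -/
def IsValExt (v : K → WithTop Λ) (μ : K[X] → WithTop Λ) : Prop :=
  (∀ f g : K[X], μ (f * g) = μ f + μ g) ∧
  (∀ f g : K[X], min (μ f) (μ g) ≤ μ (f + g)) ∧
  (∀ f : K[X], μ f = ⊤ ↔ f = 0) ∧
  (∀ c : K, μ (C c) = v c)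

/-- A semivaluation on `K[x]` extending `v`: the value `∞` may be attained at
nonzero polynomials. -/
def IsSemivalExt (v : K → WithTop Λ) (μ : K[X] → WithTop Λ) : Prop :=
  (∀ f g : K[X], μ (f * g) = μ f + μ g) ∧
  (∀ f g : K[X], min (μ f) (μ g) ≤ μ (f + g)) ∧
  μ 0 = ⊤ ∧
  (∀ c : K, μ (C c) = v c)

/-- `f ∼_μ h` : `μ (f - h) > μ f`. -/
def MuEquiv (μ : K[X] → WithTop Λ) (f h : K[X]) : Prop := μ f < μ (f - h)

/-- `h |_μ f` : `f ∼_μ q * h` for some `q`. -/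
def MuDvd (μ : K[X] → WithTop Λ) (h f : K[X]) : Prop := ∃ q : K[X], MuEquiv μ f (q * h)

/-- `f` is `μ`-minimal : `f ∤_μ g` for all nonzero `g` of degree `< deg f`. -/
def MuMinimal (μ : K[X] → WithTop Λ) (f : K[X]) : Prop :=
  ∀ g : K[X], g ≠ 0 → g.degree < f.degree → ¬ MuDvd μ f g

/-- `f` is `μ`-irreducible. -/
def MuIrred (μ : K[X] → WithTop Λ) (f : K[X]) : Prop :=
  f ≠ 0 ∧ ¬ MuDvd μ f 1 ∧ ∀ g h : K[X], MuDvd μ f (g * h) → MuDvd μ f g ∨ MuDvd μ f h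

/-- A (MacLane–Vaquié) key polynomial for `μ`: monic, `μ`-minimal and `μ`-irreducible. -/
def IsKeyPol (μ : K[X] → WithTop Λ) (φ : K[X]) : Prop :=
  φ.Monic ∧ MuMinimal μ φ ∧ MuIrred μ φ

end Core

section Helpers

variable {K : Type*} [Field K] {Λ : Type*} [AddCommGroup Λ] [LinearOrder Λ] [IsOrderedAddMonoid Λ]

private lemma aux_add_self_eq_zero {a : Λ} (h : a + a = 0) : a = 0 := by
  rcases lt_trichotomy a 0 with h1 | h1 | h1
  · have h2 := add_lt_add h1 h1
    rw [h, add_zero] at h2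
    exact absurd h2 (lt_irrefl 0)
  · exact h1
  · have h2 := add_lt_add h1 h1
    rw [h, add_zero] at h2
    exact absurd h2 (lt_irrefl 0)

private lemma aux_mu_one {v : K → WithTop Λ} {μ : K[X] → WithTop Λ} (hμ : IsValExt v μ) :
    μ 1 = 0 := by
  have h := hμ.1 1 1
  rw [mul_one] at h
  have hne : μ (1 : K[X]) ≠ ⊤ := fun ht => one_ne_zero ((hμ.2.2.1 1).mp ht)
  obtain ⟨a, ha⟩ := WithTop.ne_top_iff_exists.mp hne
  rw [← ha, ← WithTop.coe_add, WithTop.coe_inj] at h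
  have ha0 : a = 0 := by
    have h2 : a + a = a + 0 := by rw [add_zero]; exact h.symm
    exact add_left_cancel h2
  rw [← ha, ha0]
  simp

private lemma aux_mu_negone {v : K → WithTop Λ} {μ : K[X] → WithTop Λ} (hμ : IsValExt v μ) :
    μ (-1) = 0 := by
  have h := hμ.1 (-1) (-1)
  rw [neg_mul_neg, one_mul, aux_mu_one hμ] at h
  have hne : μ (-1 : K[X]) ≠ ⊤ := fun ht => by
    have := (hμ.2.2.1 (-1)).mp ht
    rw [neg_eq_zero] at this
    exact one_ne_zero this
  obtain ⟨a, ha⟩ := WithTop.ne_top_iff_exists.mp hne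
  rw [← ha, ← WithTop.coe_add] at h
  have h0 : a + a = 0 := by exact_mod_cast h.symm
  rw [← ha, aux_add_self_eq_zero h0]
  simp

private lemma aux_mu_neg {v : K → WithTop Λ} {μ : K[X] → WithTop Λ} (hμ : IsValExt v μ)
    (f : K[X]) : μ (-f) = μ f := by
  rw [← neg_one_mul, hμ.1, aux_mu_negone hμ, zero_add]

private lemma aux_mu_add_left {v : K → WithTop Λ} {μ : K[X] → WithTop Λ} (hμ : IsValExt v μ)
    {f g : K[X]} (h : μ f < μ g) : μ (f + g) = μ f := by
  refine le_antisymm ?_ ?_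
  · have h1 := hμ.2.1 (f + g) (-g)
    rw [add_neg_cancel_right, aux_mu_neg hμ] at h1
    rcases le_total (μ (f + g)) (μ g) with h2 | h2
    · rwa [min_eq_left h2] at h1
    · rw [min_eq_right h2] at h1
      exact absurd h1 (not_le.mpr h)
  · have h1 := hμ.2.1 f g
    rwa [min_eq_left h.le] at h1

private lemma aux_inf_add (S : Finset ℕ) (f : ℕ → WithTop Λ) (c : WithTop Λ) :
    S.inf f + c = S.inf fun s => f s + c := by
  induction S using Finset.cons_induction with
  | empty => simp
  | cons a S ha IH =>
    rw [Finset.inf_cons, Finset.inf_cons, ← IH]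
    rcases le_total (f a) (S.inf f) with h | h
    · rw [inf_eq_left.mpr h, inf_eq_left.mpr (add_le_add_left h c)]
    · rw [inf_eq_right.mpr h, inf_eq_right.mpr (add_le_add_left h c)]

private lemma aux_inf_range_succ {α : Type*} [SemilatticeInf α] [OrderTop α] (N : ℕ) (F : ℕ → α) :
    (Finset.range (N + 1)).inf F = F 0 ⊓ (Finset.range N).inf (fun s => F (s + 1)) := by
  have h : Finset.range (N + 1) = insert 0 ((Finset.range N).image (· + 1)) := by
    ext m
    simp only [Finset.mem_range, Finset.mem_insert, Finset.mem_image]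
    constructor
    · intro hm
      rcases Nat.eq_zero_or_pos m with h0 | h0
      · exact Or.inl h0
      · exact Or.inr ⟨m - 1, by omega, by omega⟩
    · rintro (rfl | ⟨k, hk, rfl⟩) <;> omega
  rw [h, Finset.inf_insert, Finset.inf_image]
  rfl

/-- Existence of `φ`-expansions. -/
private lemma aux_exists_expansion (φ : K[X]) (hφ : 0 < φ.degree) :
    ∀ (n : ℕ) (q : K[X]), q.natDegree ≤ n →
      ∃ (N : ℕ) (b : ℕ → K[X]), (∀ s, (b s).degree < φ.degree) ∧
        q = ∑ s ∈ Finset.range N, b s * φ ^ s := by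
  intro n
  induction n using Nat.strong_induction_on with
  | _ n IH =>
    intro q hq
    by_cases hd : q.degree < φ.degree
    · refine ⟨1, fun s => if s = 0 then q else 0, ?_, by simp⟩
      intro s
      by_cases hs : s = 0 <;> simp [hs, hd, lt_of_le_of_lt bot_le hφ]
    · push_neg at hd
      have hφ0 : φ ≠ 0 := fun h => by simp [h] at hφ
      have hq0 : q ≠ 0 := by
        intro h
        rw [h, degree_zero, le_bot_iff] at hd
        rw [hd] at hφ
        exact absurd hφ not_lt_bot
      set ψ := φ * C φ.leadingCoeff⁻¹ with hψ
      have hmon : ψ.Monic := monic_mul_leadingCoeff_inv hφ0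
      have hψd : ψ.degree = φ.degree := degree_mul_leadingCoeff_inv φ hφ0
      set q2 := C φ.leadingCoeff⁻¹ * (q /ₘ ψ) with hq2
      have hkey : q = q %ₘ ψ + φ * q2 := by
        conv_lhs => rw [← modByMonic_add_div q ψ]
        rw [hq2, hψ]
        ring
      have hdeg2 : q2.natDegree < n := by
        have hn1 : 0 < q.natDegree :=
          natDegree_pos_iff_degree_pos.mpr (lt_of_lt_of_le hφ hd)
        by_cases hz : q /ₘ ψ = 0
        · rw [hq2, hz, mul_zero, natDegree_zero]
          omega
        · have hlt : (q /ₘ ψ).degree < q.degree :=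
            degree_divByMonic_lt q ψ hq0 (hψd ▸ hφ)
          have hcne : (C φ.leadingCoeff⁻¹ : K[X]) ≠ 0 := by
            simp [leadingCoeff_ne_zero.mpr hφ0]
          have h2 : q2.degree = (q /ₘ ψ).degree := by
            rw [hq2, degree_mul, degree_C (by
              simp [leadingCoeff_ne_zero.mpr hφ0]), zero_add]
          have h3 : q2.natDegree < q.natDegree := by
            apply natDegree_lt_natDegree (by rw [hq2]; exact mul_ne_zero hcne hz)
            rw [h2]
            exact hlt
          omega
      obtain ⟨N, b, hb, hexp⟩ := IH q2.natDegree hdeg2 q2 le_rfl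
      refine ⟨N + 1, fun s => match s with | 0 => q %ₘ ψ | s + 1 => b s, ?_, ?_⟩
      · intro s
        match s with
        | 0 => exact hψd ▸ degree_modByMonic_lt q hmon
        | s + 1 => exact hb s
      · rw [Finset.sum_range_succ']
        dsimp only
        rw [pow_zero, mul_one]
        conv_lhs => rw [hkey]
        rw [hexp, Finset.mul_sum, add_comm]
        congr 1
        exact Finset.sum_congr rfl fun s _ => by ring

end Helpers

/-- `φ` is `μ`-minimal iff `μ` computes the minimum of values of the
monomials of the canonical `φ`-expansion, for every `f ∈ K[x]`. -/
theorem statement_0 {K : Type*} [Field K] {Λ : Type*} [AddCommGroup Λ] [LinearOrder Λ] [IsOrderedAddMonoid Λ]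
    (v : K → WithTop Λ) (hv : IsVal v)
    (μ : K[X] → WithTop Λ) (hμ : IsValExt v μ)
    (φ : K[X]) (hφ : 0 < φ.degree) :
    MuMinimal μ φ ↔
      ∀ (f : K[X]) (N : ℕ) (a : ℕ → K[X]),
        (∀ s, (a s).degree < φ.degree) →
        f = ∑ s ∈ Finset.range N, a s * φ ^ s →
        μ f = (Finset.range N).inf fun s => μ (a s * φ ^ s) := by
  constructor
  · -- minimal → values of expansions
    intro hmin f N a ha hf
    subst hf
    induction N generalizing a with
    | zero => simp [(hμ.2.2.1 (0 : K[X])).mpr rfl]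
    | succ N IH =>
      set g := ∑ s ∈ Finset.range N, a (s + 1) * φ ^ s with hg
      have hsum : ∑ s ∈ Finset.range (N + 1), a s * φ ^ s = g * φ + a 0 := by
        rw [Finset.sum_range_succ', pow_zero, mul_one, hg, Finset.sum_mul]
        congr 1
        exact Finset.sum_congr rfl fun s _ => by ring
      have hIH := IH (fun s => a (s + 1)) (fun s => ha (s + 1))
      have hgφ : μ (g * φ) = (Finset.range N).inf fun s => μ (a (s + 1) * φ ^ (s + 1)) := by
        rw [hμ.1, hIH, aux_inf_add]
        exact Finset.inf_congr rfl fun s _ => by rw [← hμ.1, pow_succ, ← mul_assoc]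
      have hinf : ((Finset.range (N + 1)).inf fun s => μ (a s * φ ^ s)) =
          μ (a 0) ⊓ μ (g * φ) := by
        rw [aux_inf_range_succ, hgφ, pow_zero, mul_one]
      rw [hsum, hinf]
      rcases lt_trichotomy (μ (a 0)) (μ (g * φ)) with h | h | h
      · rw [add_comm, aux_mu_add_left hμ h, inf_eq_left.mpr h.le]
      · refine le_antisymm ?_ ?_
        · by_contra hcon
          push_neg at hcon
          rw [← h, inf_idem] at hcon
          have h0 : a 0 ≠ 0 := by
            intro hz
            rw [hz, (hμ.2.2.1 (0 : K[X])).mpr rfl] at hcon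
            exact not_top_lt hcon
          refine hmin (a 0) h0 (ha 0) ⟨-g, ?_⟩
          unfold MuEquiv
          rw [show a 0 - -g * φ = g * φ + a 0 by ring]
          exact hcon
        · have h1 := hμ.2.1 (g * φ) (a 0)
          rw [min_comm]
          exact h1
      · rw [aux_mu_add_left hμ h, inf_eq_right.mpr h.le]
  · -- values of expansions → minimal
    intro H g hg0 hgdeg hdvd
    obtain ⟨q, hq⟩ := hdvd
    unfold MuEquiv at hq
    obtain ⟨N, b, hb, hexp⟩ := aux_exists_expansion φ hφ q.natDegree q le_rfl
    have hcd : ∀ s, (((fun s => match s with | 0 => g | s + 1 => -(b s)) : ℕ → K[X]) s).degree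
        < φ.degree := by
      intro s
      match s with
      | 0 => exact hgdeg
      | s + 1 => simpa using hb s
    have hneg : (∑ s ∈ Finset.range N, -b s * φ ^ (s + 1)) =
        -((∑ s ∈ Finset.range N, b s * φ ^ s) * φ) := by
      rw [Finset.sum_mul, ← Finset.sum_neg_distrib]
      exact Finset.sum_congr rfl fun s _ => by ring
    have hsum : g - q * φ = ∑ s ∈ Finset.range (N + 1),
        ((fun s => match s with | 0 => g | s + 1 => -(b s)) : ℕ → K[X]) s * φ ^ s := by
      rw [Finset.sum_range_succ']
      dsimp only
      rw [pow_zero, mul_one, hneg, hexp]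
      ring
    have hval := H (g - q * φ) (N + 1) _ hcd hsum
    have hle : μ (g - q * φ) ≤ μ g := by
      rw [hval]
      refine le_trans (Finset.inf_le (by simp : (0 : ℕ) ∈ Finset.range (N + 1))) ?_
      simp
    exact absurd (lt_of_lt_of_le hq hle) (lt_irrefl _)
end

section
/- Let (K,v) be a valued field, μ a valuation on K[x] extending v, and φ a key polynomial for μ. Let f ∈ K[x] be a monic polynomial with φ |_μ f and deg f = deg φ. Then φ ∼_μ f and f is a key polynomial for μ. -/
open Polynomial

/-- If `φ` is a key polynomial for `μ`, `f` is monic, `φ |_μ f` and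
`deg f = deg φ`, then `φ ∼_μ f` and `f` is a key polynomial for `μ`. -/
theorem statement_1 {K : Type*} [Field K] {Λ : Type*} [AddCommGroup Λ] [LinearOrder Λ] [IsOrderedAddMonoid Λ]
    (v : K → WithTop Λ) (hv : IsVal v)
    (μ : K[X] → WithTop Λ) (hμ : IsValExt v μ)
    (φ : K[X]) (hφ : IsKeyPol μ φ)
    (f : K[X]) (hmon : f.Monic) (hdvd : MuDvd μ φ f) (hdeg : f.degree = φ.degree) :
    MuEquiv μ φ f ∧ IsKeyPol μ f := by
  obtain ⟨hmul, hadd, htop, hC⟩ := hμ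
  obtain ⟨hφmon, hφmin, hφ0, hφnot1, hφirr⟩ := hφ
  have hf0 : f ≠ 0 := hmon.ne_zero
  -- μ 1 = 0
  have hμ1 : μ 1 = 0 := by
    have h11 : μ 1 + μ 1 = μ 1 := by rw [← hmul]; norm_num
    have hne : μ 1 ≠ ⊤ := fun h => one_ne_zero ((htop 1).mp h)
    cases hx : μ 1 with
    | top => exact absurd hx hne
    | coe a =>
      rw [hx] at h11
      have ha : a + a = a := by exact_mod_cast h11
      have : a = 0 := by
        have := add_right_cancel (ha.trans (zero_add a).symm)
        exact this
      simp [this]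
  -- μ (-1) = 0
  have hμn1 : μ (-1) = 0 := by
    have h11 : μ (-1) + μ (-1) = (0 : WithTop Λ) := by
      rw [← hmul]; norm_num [hμ1]
    cases hx : μ (-1) with
    | top => rw [hx] at h11; simp at h11
    | coe a =>
      rw [hx] at h11
      have ha : a + a = 0 := by exact_mod_cast h11
      have : a = 0 := by
        rcases lt_trichotomy a 0 with h | h | h
        · exact absurd ha (by have := add_neg h h; exact ne_of_lt this)
        · exact h
        · exact absurd ha (by have := add_pos h h; exact (ne_of_gt this))
      simp [this]
  have hneg : ∀ a : K[X], μ (-a) = μ a := by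
    intro a
    have h : (-a) = -1 * a := by ring
    rw [h, hmul, hμn1, zero_add]
  have hsub : ∀ a b : K[X], min (μ a) (μ b) ≤ μ (a - b) := by
    intro a b
    have := hadd a (-b)
    rw [hneg b] at this
    simpa [sub_eq_add_neg] using this
  -- value equality lemma
  have lemB : ∀ a b : K[X], μ a < μ (a - b) → μ b = μ a := by
    intro a b h
    have h1 : μ a ≤ μ b := by
      have h' := hsub a (a - b)
      rw [sub_sub_cancel] at h'
      calc μ a = min (μ a) (μ (a - b)) := (min_eq_left h.le).symm
        _ ≤ μ b := h'
    have h2 : μ b ≤ μ a := by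
      by_contra hc
      push_neg at hc
      have h' := hadd b (a - b)
      rw [add_sub_cancel] at h'
      exact absurd (lt_of_lt_of_le (lt_min hc h) h') (lt_irrefl _)
    exact le_antisymm h2 h1
  obtain ⟨q, hq⟩ := hdvd
  -- hq : μ f < μ (f - q * φ)
  have hμφ_ne : μ φ ≠ ⊤ := fun h => hφ0 ((htop φ).mp h)
  -- main claim
  have main : μ φ < μ (φ - f) ∧ μ f = μ φ := by
    by_cases hfe : f = φ
    · subst hfe
      constructor
      · rw [sub_self, (htop 0).mpr rfl]
        exact lt_top_iff_ne_top.mpr hμφ_ne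
      · rfl
    · set g : K[X] := f - φ with hg
      have hg0 : g ≠ 0 := sub_ne_zero.mpr hfe
      have hgdeg : g.degree < φ.degree := by
        have := Polynomial.degree_sub_lt hdeg hf0
          (by rw [hmon.leadingCoeff, hφmon.leadingCoeff])
        rwa [hdeg] at this
      have hfg : μ f < μ g := by
        by_contra hle
        push_neg at hle
        apply hφmin g hg0 hgdeg
        refine ⟨q - 1, ?_⟩
        have he : g - (q - 1) * φ = f - q * φ := by rw [hg]; ring
        unfold MuEquiv
        rw [he]
        exact lt_of_le_of_lt hle hq
      have hfφ : μ f ≤ μ φ := by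
        have h' := hsub f g
        rw [hg, sub_sub_cancel] at h'
        calc μ f = min (μ f) (μ g) := (min_eq_left hfg.le).symm
          _ ≤ μ φ := h'
      have hφg : μ φ < μ g := by
        by_contra hc
        push_neg at hc
        have h' := hadd φ g
        rw [hg, add_sub_cancel] at h'
        have hgf : μ g ≤ μ f := le_trans (le_of_eq (min_eq_right hc).symm) h'
        exact absurd (lt_of_lt_of_le hfg hgf) (lt_irrefl _)
      have hφf : μ φ ≤ μ f := by
        have h' := hadd φ g
        rw [hg, add_sub_cancel] at h'
        calc μ φ = min (μ φ) (μ g) := (min_eq_left hφg.le).symm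
          _ ≤ μ f := h'
      refine ⟨?_, le_antisymm hfφ hφf⟩
      have : μ (φ - f) = μ g := by
        have : φ - f = -g := by rw [hg]; ring
        rw [this, hneg]
      rw [this]
      exact hφg
  obtain ⟨hequiv, hval⟩ := main
  have hfφ_lt : μ f < μ (f - φ) := by
    have : μ (f - φ) = μ (φ - f) := by
      have h : f - φ = -(φ - f) := by ring
      rw [h, hneg]
    rw [this, hval]
    exact hequiv
  -- transfer of μ-divisibility
  have key : ∀ a b : K[X], μ b = μ a → μ a < μ (a - b) →
      ∀ g : K[X], MuDvd μ a g → MuDvd μ b g := by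
    rintro a b hab hlt g ⟨p, hp⟩
    have hp0 : p ≠ 0 := by
      rintro rfl
      simp only [MuEquiv, zero_mul, sub_zero] at hp
      exact absurd hp (lt_irrefl _)
    have hpne : μ p ≠ ⊤ := fun h => hp0 ((htop p).mp h)
    refine ⟨p, ?_⟩
    have hga : μ (p * a) = μ g := lemB g (p * a) hp
    have h1 : μ g < μ (p * (a - b)) := by
      rw [hmul]
      calc μ g = μ p + μ a := by rw [← hga, hmul]
        _ < μ p + μ (a - b) := WithTop.add_lt_add_left hpne hlt
    have he : g - p * b = (g - p * a) + p * (a - b) := by ring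
    unfold MuEquiv
    rw [he]
    exact lt_of_lt_of_le (lt_min hp h1) (hadd _ _)
  have keyφf : ∀ g : K[X], MuDvd μ φ g → MuDvd μ f g :=
    key φ f hval hequiv
  have keyfφ : ∀ g : K[X], MuDvd μ f g → MuDvd μ φ g :=
    key f φ hval.symm hfφ_lt
  refine ⟨hequiv, hmon, ?_, hf0, ?_, ?_⟩
  · intro g hg0 hgdeg hdvdfg
    exact hφmin g hg0 (hdeg ▸ hgdeg) (keyfφ g hdvdfg)
  · exact fun h1 => hφnot1 (keyfφ 1 h1)
  · intro g h hd
    exact (hφirr g h (keyfφ _ hd)).imp (keyφf g) (keyφf h)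
end

section
/- Let (K,v) be a valued field, μ a valuation on K[x] extending v, and φ a key polynomial for μ. Then for every monic non-constant f ∈ K[x] one has deg(φ)·μ(f) ≤ deg(f)·μ(φ) (natural-number scalar multiplication in the value group), and equality holds if and only if f is μ-minimal. -/
open Polynomial

namespace S2Aux
variable {K : Type*} [Field K] {Λ : Type*} [AddCommGroup Λ] [LinearOrder Λ] [IsOrderedAddMonoid Λ]

theorem half_zero {b : Λ} (h : b + b = 0) : b = 0 := by
  rcases lt_trichotomy b 0 with hb | hb | hb
  · exact absurd h (ne_of_lt (by simpa using add_lt_add hb hb))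
  · exact hb
  · exact absurd h (ne_of_gt (by simpa using add_lt_add hb hb))

theorem idem_zero {b : Λ} (h : b + b = b) : b = 0 := by
  have h2 : b + b = b + 0 := by rw [h, add_zero]
  exact add_left_cancel h2

structure Nice (μ : K[X] → WithTop Λ) : Prop where
  mul : ∀ f g : K[X], μ (f * g) = μ f + μ g
  addmin : ∀ f g : K[X], min (μ f) (μ g) ≤ μ (f + g)
  top : ∀ f : K[X], μ f = ⊤ ↔ f = 0
  neg : ∀ f : K[X], μ (-f) = μ f

variable {μ : K[X] → WithTop Λ}

theorem Nice.ne_top (hn : Nice μ) {f : K[X]} (hf : f ≠ 0) : μ f ≠ ⊤ := fun h => hf ((hn.top f).1 h)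
theorem Nice.lt_top (hn : Nice μ) {f : K[X]} (hf : f ≠ 0) : μ f < ⊤ :=
  lt_of_le_of_ne le_top (hn.ne_top hf)
theorem Nice.zero (hn : Nice μ) : μ 0 = ⊤ := (hn.top 0).2 rfl
theorem Nice.submin (hn : Nice μ) (f g : K[X]) : min (μ f) (μ g) ≤ μ (f - g) := by
  have := hn.addmin f (-g); rwa [hn.neg, ← sub_eq_add_neg] at this
theorem Nice.one' (hn : Nice μ) : μ 1 = 0 := by
  have h := hn.mul 1 1
  rw [one_mul] at h
  cases hμ1 : μ (1 : K[X]) with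
  | top => exact absurd ((hn.top 1).1 hμ1) one_ne_zero
  | coe b =>
    rw [hμ1, ← WithTop.coe_add, WithTop.coe_eq_coe] at h
    exact_mod_cast idem_zero h.symm
/-- From the problem's hypotheses to `Nice`. -/
theorem nice_of {v : K → WithTop Λ} (hv : (∀ a b : K, v (a * b) = v a + v b) ∧
    (∀ a b : K, min (v a) (v b) ≤ v (a + b)) ∧ (∀ a : K, v a = ⊤ ↔ a = 0))
    (hμ : (∀ f g : K[X], μ (f * g) = μ f + μ g) ∧
      (∀ f g : K[X], min (μ f) (μ g) ≤ μ (f + g)) ∧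
      (∀ f : K[X], μ f = ⊤ ↔ f = 0) ∧ (∀ c : K, μ (C c) = v c)) : Nice μ := by
  obtain ⟨hm, ha, ht, hc⟩ := hμ
  have hv1 : v 1 = 0 := by
    have h := hv.1 1 1
    rw [one_mul] at h
    cases hμ1 : v (1 : K) with
    | top => exact absurd ((hv.2.2 1).1 hμ1) one_ne_zero
    | coe b =>
      rw [hμ1, ← WithTop.coe_add, WithTop.coe_eq_coe] at h
      exact_mod_cast idem_zero h.symm
  have hvm1 : v (-1) = 0 := by
    have h := hv.1 (-1) (-1)
    rw [neg_mul_neg, one_mul, hv1] at h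
    cases hμ1 : v (-1 : K) with
    | top => rw [hμ1] at h; simp at h
    | coe b =>
      rw [hμ1, ← WithTop.coe_add, ← WithTop.coe_zero, WithTop.coe_eq_coe] at h
      exact_mod_cast half_zero h.symm
  refine ⟨hm, ha, ht, fun f => ?_⟩
  have h2 : μ (-f) = μ (C (-1) * f) := by rw [map_neg, map_one, neg_one_mul]
  rw [h2, hm, hc, hvm1, zero_add]

theorem Nice.add_eq_left (hn : Nice μ) {f g : K[X]} (h : μ f < μ g) : μ (f + g) = μ f := by
  refine le_antisymm ?_ (le_trans (le_of_eq (min_eq_left h.le).symm) (hn.addmin f g))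
  have h2 := hn.submin (f + g) g
  rw [add_sub_cancel_right] at h2
  rcases min_le_iff.1 h2 with h3 | h3
  · exact h3
  · exact absurd h3 (not_le.2 h)
theorem Nice.sub_eq_left (hn : Nice μ) {f g : K[X]} (h : μ f < μ g) : μ (f - g) = μ f := by
  rw [sub_eq_add_neg]; exact hn.add_eq_left (by rwa [hn.neg])
theorem Nice.eq_of_sub_gt (hn : Nice μ) {x y : K[X]} (h : μ y < μ (x - y)) : μ x = μ y := by
  have h1 : μ y ≤ μ x := by
    have h2 := hn.addmin y (x - y)
    have e : y + (x - y) = x := by ring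
    rw [e, min_eq_left h.le] at h2
    exact h2
  refine le_antisymm ?_ h1
  by_contra hlt
  push_neg at hlt
  have h3 := hn.submin x (x - y)
  rw [sub_sub_cancel] at h3
  rcases min_le_iff.1 h3 with h4 | h4
  · exact absurd h4 (not_le.2 hlt)
  · exact absurd h4 (not_le.2 h)

/-! ### MuEquiv lemmas -/

theorem me_ne_zero_left (hn : Nice μ) {f h : K[X]} (he : MuEquiv μ f h) : f ≠ 0 := by
  intro h0
  subst h0
  simp only [MuEquiv, hn.zero] at he
  exact absurd he (by simp)

theorem me_ne_zero_right (hn : Nice μ) {f h : K[X]} (he : MuEquiv μ f h) : h ≠ 0 := by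
  intro h0
  subst h0
  simp only [MuEquiv, sub_zero] at he
  exact absurd he (lt_irrefl _)

theorem me_eq (hn : Nice μ) {f h : K[X]} (he : MuEquiv μ f h) : μ h = μ f := by
  refine hn.eq_of_sub_gt ?_
  have : μ (h - f) = μ (f - h) := by rw [← hn.neg (f - h), neg_sub]
  rw [this]
  exact he

theorem me_symm (hn : Nice μ) {f h : K[X]} (he : MuEquiv μ f h) : MuEquiv μ h f := by
  show μ h < μ (h - f)
  have : μ (h - f) = μ (f - h) := by rw [← hn.neg (f - h), neg_sub]
  rw [this, me_eq hn he]
  exact he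

theorem me_trans (hn : Nice μ) {f g h : K[X]} (h1 : MuEquiv μ f g) (h2 : MuEquiv μ g h) :
    MuEquiv μ f h := by
  show μ f < μ (f - h)
  have e : f - h = (f - g) + (g - h) := by ring
  rw [e]
  have hg : μ g = μ f := me_eq hn h1
  refine lt_of_lt_of_le (lt_min h1 (by rw [← hg]; exact h2)) (hn.addmin _ _)

theorem me_refl (hn : Nice μ) {f : K[X]} (hf : f ≠ 0) : MuEquiv μ f f := by
  show μ f < μ (f - f)
  rw [sub_self, hn.zero]
  exact hn.lt_top hf

theorem me_mul (hn : Nice μ) {a b c d : K[X]} (h1 : MuEquiv μ a b) (h2 : MuEquiv μ c d) :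
    MuEquiv μ (a * c) (b * d) := by
  have ha : a ≠ 0 := me_ne_zero_left hn h1
  have hc : c ≠ 0 := me_ne_zero_left hn h2
  show μ (a * c) < μ (a * c - b * d)
  have e : a * c - b * d = (a - b) * c + b * (c - d) := by ring
  rw [e, hn.mul]
  have k1 : μ a + μ c < μ (a - b) + μ c :=
    WithTop.add_lt_add_right (hn.ne_top hc) h1
  have k2 : μ a + μ c < μ b + μ (c - d) := by
    rw [me_eq hn h1]
    exact WithTop.add_lt_add_left (hn.ne_top ha) h2
  refine lt_of_lt_of_le (lt_min ?_ ?_) (hn.addmin _ _)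
  · rw [hn.mul]; exact k1
  · rw [hn.mul]; exact k2

theorem me_mul_left (hn : Nice μ) {a b : K[X]} (c : K[X]) (hc : c ≠ 0) (h : MuEquiv μ a b) :
    MuEquiv μ (c * a) (c * b) := me_mul hn (me_refl hn hc) h

theorem me_pow (hn : Nice μ) {a b : K[X]} (h : MuEquiv μ a b) (k : ℕ) :
    MuEquiv μ (a ^ (k + 1)) (b ^ (k + 1)) := by
  induction k with
  | zero => simpa using h
  | succ k ih => rw [pow_succ, pow_succ]; exact me_mul hn ih h

/-! ### Division helpers -/

variable {φ : K[X]}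

theorem natdeg_mod_lt (hΦ : φ.Monic) (hm : 1 ≤ φ.natDegree) (h : K[X]) :
    (h %ₘ φ).natDegree < φ.natDegree := by
  by_cases h0 : h %ₘ φ = 0
  · simpa [h0] using (Nat.lt_of_lt_of_le Nat.zero_lt_one hm)
  · exact natDegree_lt_natDegree h0 (degree_modByMonic_lt h hΦ)

theorem unique_div_mod (hΦ : φ.Monic) {X Y : K[X]} (hd : degree X < degree φ) :
    (X + Y * φ) /ₘ φ = Y ∧ (X + Y * φ) %ₘ φ = X :=
  div_modByMonic_unique Y X hΦ ⟨by ring, hd⟩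

theorem mul_div_cancel' (hΦ : φ.Monic) (hm : 1 ≤ φ.natDegree) (Y : K[X]) :
    (Y * φ) /ₘ φ = Y ∧ (Y * φ) %ₘ φ = 0 := by
  have h0 : degree (0 : K[X]) < degree φ := by
    rw [degree_zero]
    exact bot_lt_iff_ne_bot.2 (fun hb => hΦ.ne_zero (degree_eq_bot.1 hb))
  have := unique_div_mod hΦ (Y := Y) h0
  rwa [zero_add] at this

theorem div_ne_zero_deg (hΦ : φ.Monic) {h : K[X]} (hne : h /ₘ φ ≠ 0) :
    φ.natDegree ≤ h.natDegree := by
  have : ¬ degree h < degree φ := fun hlt => hne ((divByMonic_eq_zero_iff hΦ).2 hlt)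
  exact natDegree_le_natDegree (not_lt.1 this)

theorem div_deg_ge (hΦ : φ.Monic) {h : K[X]} (hge : φ.natDegree ≤ h.natDegree) (h0 : h ≠ 0) :
    (h /ₘ φ).natDegree = h.natDegree - φ.natDegree := natDegree_divByMonic h hΦ

theorem monic_div (hΦ : φ.Monic) {h : K[X]} (hh : h.Monic) (hge : φ.natDegree ≤ h.natDegree) :
    (h /ₘ φ).Monic := by
  have hd : degree φ ≤ degree h := by
    rw [degree_eq_natDegree hΦ.ne_zero, degree_eq_natDegree hh.ne_zero]
    exact_mod_cast hge
  show (h /ₘ φ).leadingCoeff = 1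
  rw [leadingCoeff_divByMonic_of_monic hΦ hd]
  exact hh

theorem div_add' (hΦ : φ.Monic) (a b : K[X]) :
    (a + b) /ₘ φ = a /ₘ φ + b /ₘ φ ∧ (a + b) %ₘ φ = a %ₘ φ + b %ₘ φ := by
  have ha := modByMonic_add_div a φ
  have hb := modByMonic_add_div b φ
  have hdeg : degree (a %ₘ φ + b %ₘ φ) < degree φ :=
    lt_of_le_of_lt (degree_add_le _ _)
      (max_lt (degree_modByMonic_lt a hΦ) (degree_modByMonic_lt b hΦ))
  have h2 := div_modByMonic_unique (f := a + b) (g := φ) (a /ₘ φ + b /ₘ φ) (a %ₘ φ + b %ₘ φ) hΦ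
    ⟨by linear_combination ha + hb, hdeg⟩
  exact ⟨h2.1, h2.2⟩

/-- One-step expansion formula. -/
theorem lemA (hn : Nice μ) (hΦ : φ.Monic) (hmin : MuMinimal μ φ) (h : K[X]) :
    μ h = min (μ (h %ₘ φ)) (μ (h /ₘ φ) + μ φ) := by
  have hd : h %ₘ φ + φ * (h /ₘ φ) = h := modByMonic_add_div h φ
  have hle : min (μ (h %ₘ φ)) (μ (h /ₘ φ) + μ φ) ≤ μ h := by
    have h2 := hn.addmin (h %ₘ φ) (φ * (h /ₘ φ))
    rw [hd, hn.mul, add_comm (μ φ) _] at h2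
    exact h2
  refine le_antisymm ?_ hle
  by_contra hgt
  push_neg at hgt
  rcases le_or_gt (μ (h %ₘ φ)) (μ (h /ₘ φ) + μ φ) with hc | hc
  · rw [min_eq_left hc] at hgt
    have hr0 : h %ₘ φ ≠ 0 := by
      intro h0
      rw [h0, hn.zero] at hgt
      exact absurd hgt (by simp)
    have hdvd : MuDvd μ φ (h %ₘ φ) := by
      refine ⟨-(h /ₘ φ), ?_⟩
      show μ (h %ₘ φ) < μ (h %ₘ φ - -(h /ₘ φ) * φ)
      have e : h %ₘ φ - -(h /ₘ φ) * φ = h := by linear_combination hd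
      rw [e]
      exact hgt
    exact hmin _ hr0 (degree_modByMonic_lt h hΦ) hdvd
  · rw [min_eq_right hc.le] at hgt
    have h2 := hn.submin h (h %ₘ φ)
    have e : h - h %ₘ φ = φ * (h /ₘ φ) := by linear_combination -hd
    rw [e, hn.mul, add_comm] at h2
    rcases min_le_iff.1 h2 with h3 | h3
    · exact absurd h3 (not_le.2 hgt)
    · exact absurd h3 (not_le.2 hc)


/-! ### The top-index function `sbar` -/

open scoped Classical in
noncomputable def sbar (μ : K[X] → WithTop Λ) (φ : K[X]) (h : K[X]) : ℕ :=
  if _hd : (h /ₘ φ).natDegree < h.natDegree then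
    (if μ (h /ₘ φ) + μ φ ≤ μ (h %ₘ φ) then sbar μ φ (h /ₘ φ) + 1 else 0)
  else 0
termination_by h.natDegree

variable (μ) in
theorem sbar_small (hn : Nice μ) (hΦ : φ.Monic) {h : K[X]}
    (hd : h.natDegree < φ.natDegree) : sbar μ φ h = 0 := by
  rw [sbar]
  have hdiv0 : h /ₘ φ = 0 := (divByMonic_eq_zero_iff hΦ).2 (degree_lt_degree hd)
  rw [hdiv0]
  split
  · next hguard =>
    rw [natDegree_zero] at hguard
    have hne : h ≠ 0 := fun h0 => by simp [h0] at hguard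
    have hcond : ¬ (μ (0 : K[X]) + μ φ ≤ μ (h %ₘ φ)) := by
      rw [hn.zero, top_add, top_le_iff,
        (modByMonic_eq_self_iff hΦ).2 (degree_lt_degree hd)]
      exact fun hc => hne ((hn.top h).1 hc)
    rw [if_neg hcond]
  · rfl

variable (μ) in
theorem sbar_zero' (hn : Nice μ) (hΦ : φ.Monic) (hm : 1 ≤ φ.natDegree) : sbar μ φ 0 = 0 :=
  sbar_small μ hn hΦ (by simpa using (Nat.lt_of_lt_of_le Nat.zero_lt_one hm))

variable (μ) in
theorem sbar_step (hΦ : φ.Monic) (hm : 1 ≤ φ.natDegree) {h : K[X]}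
    (hdm : φ.natDegree ≤ h.natDegree) :
    sbar μ φ h = if μ (h /ₘ φ) + μ φ ≤ μ (h %ₘ φ) then sbar μ φ (h /ₘ φ) + 1 else 0 := by
  have hlt : (h /ₘ φ).natDegree < h.natDegree := by
    rw [natDegree_divByMonic h hΦ]
    exact Nat.sub_lt (hm.trans hdm) hm
  rw [sbar, dif_pos hlt]

variable (μ) in
theorem sbar_pos (hn : Nice μ) (hΦ : φ.Monic) (hm : 1 ≤ φ.natDegree) {h : K[X]}
    (hp : 1 ≤ sbar μ φ h) :
    φ.natDegree ≤ h.natDegree ∧ (μ (h /ₘ φ) + μ φ ≤ μ (h %ₘ φ)) ∧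
      sbar μ φ h = sbar μ φ (h /ₘ φ) + 1 := by
  by_cases hd : φ.natDegree ≤ h.natDegree
  · by_cases hc : μ (h /ₘ φ) + μ φ ≤ μ (h %ₘ φ)
    · exact ⟨hd, hc, by rw [sbar_step μ hΦ hm hd, if_pos hc]⟩
    · rw [sbar_step μ hΦ hm hd, if_neg hc] at hp; omega
  · rw [sbar_small μ hn hΦ (by omega)] at hp; omega

theorem div_ne_zero_of_cond (hn : Nice μ) (hΦ : φ.Monic) {h : K[X]} (h0 : h ≠ 0)
    (hc : μ (h /ₘ φ) + μ φ ≤ μ (h %ₘ φ)) : h /ₘ φ ≠ 0 := by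
  intro hu
  rw [hu, hn.zero, top_add, top_le_iff] at hc
  have hr := (hn.top _).1 hc
  have hid := modByMonic_add_div h φ
  rw [hr, hu, mul_zero, add_zero] at hid
  exact h0 hid.symm

variable (μ) in
theorem sbar_deg (hn : Nice μ) (hΦ : φ.Monic) (hm : 1 ≤ φ.natDegree) :
    ∀ n (h : K[X]), h.natDegree ≤ n → h ≠ 0 → φ.natDegree * sbar μ φ h ≤ h.natDegree := by
  intro n
  induction n using Nat.strong_induction_on with
  | _ n IH =>
  intro h hdn h0
  by_cases hp : 1 ≤ sbar μ φ h
  · obtain ⟨hdm, hc, heq⟩ := sbar_pos μ hn hΦ hm hp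
    have hu0 : h /ₘ φ ≠ 0 := div_ne_zero_of_cond hn hΦ h0 hc
    have hdu : (h /ₘ φ).natDegree = h.natDegree - φ.natDegree := natDegree_divByMonic h hΦ
    have hlt : (h /ₘ φ).natDegree < n := by omega
    have IH2 := IH _ hlt (h /ₘ φ) le_rfl hu0
    rw [heq]
    have : φ.natDegree * (sbar μ φ (h /ₘ φ) + 1) =
        φ.natDegree * sbar μ φ (h /ₘ φ) + φ.natDegree := by ring
    omega
  · have h1 : sbar μ φ h = 0 := by omega
    simp [h1]

variable (μ) in
theorem sbar_mul_phi (hn : Nice μ) (hΦ : φ.Monic) (hm : 1 ≤ φ.natDegree) {Y : K[X]}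
    (hY : Y ≠ 0) : sbar μ φ (Y * φ) = sbar μ φ Y + 1 := by
  obtain ⟨hdiv, hmod⟩ := mul_div_cancel' hΦ hm Y
  have hdm : φ.natDegree ≤ (Y * φ).natDegree := by
    rw [natDegree_mul hY hΦ.ne_zero]; omega
  rw [sbar_step μ hΦ hm hdm, hdiv, hmod, if_pos (by rw [hn.zero]; exact le_top)]

theorem div_sub' (hΦ : φ.Monic) (a b : K[X]) :
    (a - b) /ₘ φ = a /ₘ φ - b /ₘ φ ∧ (a - b) %ₘ φ = a %ₘ φ - b %ₘ φ := by
  have ha := modByMonic_add_div a φ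
  have hb := modByMonic_add_div b φ
  have hdeg : degree (a %ₘ φ - b %ₘ φ) < degree φ :=
    lt_of_le_of_lt (degree_sub_le _ _)
      (max_lt (degree_modByMonic_lt a hΦ) (degree_modByMonic_lt b hΦ))
  have h2 := div_modByMonic_unique (f := a - b) (g := φ) (a /ₘ φ - b /ₘ φ) (a %ₘ φ - b %ₘ φ) hΦ
    ⟨by linear_combination ha - hb, hdeg⟩
  exact ⟨h2.1, h2.2⟩

/-- helper consequences of `lemA`. -/
theorem lemA_mod_ge (hn : Nice μ) (hΦ : φ.Monic) (hmin : MuMinimal μ φ) (h : K[X]) :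
    μ h ≤ μ (h %ₘ φ) := by
  rw [lemA hn hΦ hmin h]; exact min_le_left _ _

theorem lemA_div_ge (hn : Nice μ) (hΦ : φ.Monic) (hmin : MuMinimal μ φ) (h : K[X]) :
    μ h ≤ μ (h /ₘ φ) + μ φ := by
  rw [lemA hn hΦ hmin h]; exact min_le_right _ _

theorem lemA_of_cond (hn : Nice μ) (hΦ : φ.Monic) (hmin : MuMinimal μ φ) {h : K[X]}
    (hc : μ (h /ₘ φ) + μ φ ≤ μ (h %ₘ φ)) : μ h = μ (h /ₘ φ) + μ φ := by
  rw [lemA hn hΦ hmin h]; exact min_eq_right hc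

theorem lemA_of_not_cond (hn : Nice μ) (hΦ : φ.Monic) (hmin : MuMinimal μ φ) {h : K[X]}
    (hc : ¬ (μ (h /ₘ φ) + μ φ ≤ μ (h %ₘ φ))) : μ h = μ (h %ₘ φ) := by
  rw [lemA hn hΦ hmin h]; exact min_eq_left (le_of_not_ge hc)


/-! ### Invariance of `sbar` under `μ`-equivalence -/

variable (μ) in
theorem me_sbar (hn : Nice μ) (hΦ : φ.Monic) (hm : 1 ≤ φ.natDegree) (hmin : MuMinimal μ φ) :
    ∀ n (P Q : K[X]), P.natDegree ≤ n → MuEquiv μ P Q → sbar μ φ P = sbar μ φ Q := by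
  have hφt : μ φ ≠ ⊤ := hn.ne_top hΦ.ne_zero
  intro n
  induction n using Nat.strong_induction_on with
  | _ n IH =>
  intro P Q hdn he
  have hP0 : P ≠ 0 := me_ne_zero_left hn he
  have hQ0 : Q ≠ 0 := me_ne_zero_right hn he
  have hPQ : μ Q = μ P := me_eq hn he
  have hr : μ P < μ (P - Q) := he
  obtain ⟨hdiv, hmod⟩ := div_sub' hΦ P Q
  have hmc : μ P < μ (P %ₘ φ - Q %ₘ φ) := by
    rw [← hmod]; exact lt_of_lt_of_le hr (lemA_mod_ge hn hΦ hmin _)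
  have hqc : μ P < μ (P /ₘ φ - Q /ₘ φ) + μ φ := by
    rw [← hdiv]; exact lt_of_lt_of_le hr (lemA_div_ge hn hΦ hmin _)
  by_cases hcP : μ (P /ₘ φ) + μ φ ≤ μ (P %ₘ φ)
  · -- Case A
    have huP0 : P /ₘ φ ≠ 0 := div_ne_zero_of_cond hn hΦ hP0 hcP
    have hdmP : φ.natDegree ≤ P.natDegree := div_ne_zero_deg hΦ huP0
    have hvalP : μ P = μ (P /ₘ φ) + μ φ := lemA_of_cond hn hΦ hmin hcP
    have hequ : MuEquiv μ (P /ₘ φ) (Q /ₘ φ) := by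
      show μ (P /ₘ φ) < μ (P /ₘ φ - Q /ₘ φ)
      have h2 : μ (P /ₘ φ) + μ φ < μ (P /ₘ φ - Q /ₘ φ) + μ φ := by rw [← hvalP]; exact hqc
      exact (WithTop.add_lt_add_iff_right hφt).1 h2
    have hdult : (P /ₘ φ).natDegree < n := by
      have := natDegree_divByMonic P hΦ
      omega
    have IH2 := IH _ hdult (P /ₘ φ) (Q /ₘ φ) le_rfl hequ
    have hvaluQ : μ (Q /ₘ φ) = μ (P /ₘ φ) := me_eq hn hequ
    have huQ0 : Q /ₘ φ ≠ 0 := by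
      intro h0; rw [h0, hn.zero] at hvaluQ; exact hn.ne_top huP0 hvaluQ.symm
    have hdmQ : φ.natDegree ≤ Q.natDegree := div_ne_zero_deg hΦ huQ0
    have hcQ : μ (Q /ₘ φ) + μ φ ≤ μ (Q %ₘ φ) := by
      have h3 := hn.submin (P %ₘ φ) (P %ₘ φ - Q %ₘ φ)
      rw [sub_sub_cancel] at h3
      refine le_trans ?_ h3
      rw [hvaluQ, ← hvalP]
      exact le_min (le_trans hvalP.le hcP) hmc.le
    rw [sbar_step μ hΦ hm hdmP, if_pos hcP, sbar_step μ hΦ hm hdmQ, if_pos hcQ, IH2]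
  · -- Case B
    have hvalP : μ P = μ (P %ₘ φ) := lemA_of_not_cond hn hΦ hmin hcP
    have hsbP : sbar μ φ P = 0 := by
      by_cases hdm : φ.natDegree ≤ P.natDegree
      · rw [sbar_step μ hΦ hm hdm, if_neg hcP]
      · exact sbar_small μ hn hΦ (by omega)
    have hcQ : ¬ (μ (Q /ₘ φ) + μ φ ≤ μ (Q %ₘ φ)) := by
      intro hcQ
      have huQ0 : Q /ₘ φ ≠ 0 := div_ne_zero_of_cond hn hΦ hQ0 hcQ
      have hvalQ : μ Q = μ (Q /ₘ φ) + μ φ := lemA_of_cond hn hΦ hmin hcQ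
      have h4 : μ (Q /ₘ φ) < μ (P /ₘ φ - Q /ₘ φ) := by
        have h5 : μ (Q /ₘ φ) + μ φ < μ (P /ₘ φ - Q /ₘ φ) + μ φ := by
          rw [← hvalQ, hPQ]; exact hqc
        exact (WithTop.add_lt_add_iff_right hφt).1 h5
      have h6 : μ (P /ₘ φ) = μ (Q /ₘ φ) := hn.eq_of_sub_gt h4
      have h7 : μ P < μ (P /ₘ φ) + μ φ := by
        rw [hvalP]; exact lt_of_not_ge hcP
      rw [h6, ← hvalQ, hPQ] at h7
      exact absurd h7 (lt_irrefl _)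
    have hsbQ : sbar μ φ Q = 0 := by
      by_cases hdm : φ.natDegree ≤ Q.natDegree
      · rw [sbar_step μ hΦ hm hdm, if_neg hcQ]
      · exact sbar_small μ hn hΦ (by omega)
    rw [hsbP, hsbQ]

/-! ### Adding a term of larger or equal value -/

variable (μ) in
theorem claimZ' (hn : Nice μ) (hΦ : φ.Monic) (hm : 1 ≤ φ.natDegree) (hmin : MuMinimal μ φ) :
    ∀ n (Y X : K[X]), Y.natDegree ≤ n → μ Y < μ X →
      sbar μ φ Y ≤ sbar μ φ (X + Y) ∧ μ (X + Y) = μ Y := by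
  have hφt : μ φ ≠ ⊤ := hn.ne_top hΦ.ne_zero
  intro n
  induction n using Nat.strong_induction_on with
  | _ n IH =>
  intro Y X hdn hlt
  have hval : μ (X + Y) = μ Y := by rw [add_comm]; exact hn.add_eq_left hlt
  by_cases hp : 1 ≤ sbar μ φ Y
  · obtain ⟨hdm, hc, heq⟩ := sbar_pos μ hn hΦ hm hp
    have hY0 : Y ≠ 0 := by
      intro h0; rw [h0, hn.zero] at hlt; exact absurd hlt (by simp)
    have hu0 : Y /ₘ φ ≠ 0 := div_ne_zero_of_cond hn hΦ hY0 hc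
    have hvalY : μ Y = μ (Y /ₘ φ) + μ φ := lemA_of_cond hn hΦ hmin hc
    have hgtu : μ (Y /ₘ φ) < μ (X /ₘ φ) := by
      have h1 : μ Y < μ (X /ₘ φ) + μ φ := lt_of_lt_of_le hlt (lemA_div_ge hn hΦ hmin X)
      rw [hvalY] at h1
      exact (WithTop.add_lt_add_iff_right hφt).1 h1
    have hdult : (Y /ₘ φ).natDegree < n := by
      have := natDegree_divByMonic Y hΦ
      omega
    have IH2 := IH _ hdult (Y /ₘ φ) (X /ₘ φ) le_rfl hgtu
    obtain ⟨hdiv, hmod⟩ := div_add' hΦ X Y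
    have hq_ne : X /ₘ φ + Y /ₘ φ ≠ 0 := by
      intro h0; rw [h0, hn.zero] at IH2; exact hn.ne_top hu0 IH2.2.symm
    have hdm2 : φ.natDegree ≤ (X + Y).natDegree :=
      div_ne_zero_deg hΦ (by rw [hdiv]; exact hq_ne)
    have hrem : μ Y ≤ μ (X %ₘ φ + Y %ₘ φ) := by
      refine le_trans (le_min ?_ ?_) (hn.addmin (X %ₘ φ) (Y %ₘ φ))
      · exact le_of_lt (lt_of_lt_of_le hlt (lemA_mod_ge hn hΦ hmin X))
      · rw [hvalY]; exact hc
    have hcond : μ ((X + Y) /ₘ φ) + μ φ ≤ μ ((X + Y) %ₘ φ) := by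
      rw [hdiv, hmod, IH2.2, ← hvalY]
      exact hrem
    constructor
    · rw [sbar_step μ hΦ hm hdm2, if_pos hcond, hdiv, heq]
      omega
    · exact hval
  · exact ⟨by omega, hval⟩

variable (μ) in
theorem claimZ (hn : Nice μ) (hΦ : φ.Monic) (hm : 1 ≤ φ.natDegree) (hmin : MuMinimal μ φ) :
    ∀ n (Y X : K[X]), Y.natDegree ≤ n → μ X = μ Y → sbar μ φ X < sbar μ φ Y →
      sbar μ φ Y ≤ sbar μ φ (X + Y) ∧ μ (X + Y) = μ Y := by
  have hφt : μ φ ≠ ⊤ := hn.ne_top hΦ.ne_zero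
  intro n
  induction n using Nat.strong_induction_on with
  | _ n IH =>
  intro Y X hdn heqv hslt
  have hpY : 1 ≤ sbar μ φ Y := by omega
  obtain ⟨hdmY, hcY, heqY⟩ := sbar_pos μ hn hΦ hm hpY
  have hY0 : Y ≠ 0 := by
    intro h0
    rw [h0, sbar_zero' μ hn hΦ hm] at hpY
    omega
  have hX0 : X ≠ 0 := by
    intro h0; rw [h0, hn.zero] at heqv; exact hn.ne_top hY0 heqv.symm
  have huY0 : Y /ₘ φ ≠ 0 := div_ne_zero_of_cond hn hΦ hY0 hcY
  have hvalY : μ Y = μ (Y /ₘ φ) + μ φ := lemA_of_cond hn hΦ hmin hcY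
  have hdult : (Y /ₘ φ).natDegree < n := by
    have := natDegree_divByMonic Y hΦ
    omega
  obtain ⟨hdiv, hmod⟩ := div_add' hΦ X Y
  have htail : sbar μ φ (Y /ₘ φ) ≤ sbar μ φ (X /ₘ φ + Y /ₘ φ) ∧
      μ (X /ₘ φ + Y /ₘ φ) = μ (Y /ₘ φ) := by
    by_cases hpX : 1 ≤ sbar μ φ X
    · obtain ⟨hdmX, hcX, heqX⟩ := sbar_pos μ hn hΦ hm hpX
      have hvalX : μ X = μ (X /ₘ φ) + μ φ := lemA_of_cond hn hΦ hmin hcX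
      have hequ : μ (X /ₘ φ) = μ (Y /ₘ φ) := by
        have h2 : μ (X /ₘ φ) + μ φ = μ (Y /ₘ φ) + μ φ := by
          rw [← hvalX, ← hvalY]; exact heqv
        exact WithTop.add_right_cancel hφt h2
      have hsltu : sbar μ φ (X /ₘ φ) < sbar μ φ (Y /ₘ φ) := by omega
      exact IH _ hdult (Y /ₘ φ) (X /ₘ φ) le_rfl hequ hsltu
    · have hgtu : μ (Y /ₘ φ) < μ (X /ₘ φ) := by
        by_cases hcX : μ (X /ₘ φ) + μ φ ≤ μ (X %ₘ φ)
        · have hdX : X.natDegree < φ.natDegree := by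
            by_contra hge
            push_neg at hge
            rw [sbar_step μ hΦ hm hge, if_pos hcX] at hpX
            omega
          have h0 : X /ₘ φ = 0 := (divByMonic_eq_zero_iff hΦ).2 (degree_lt_degree hdX)
          rw [h0, hn.zero]
          exact hn.lt_top huY0
        · have hvX : μ X = μ (X %ₘ φ) := lemA_of_not_cond hn hΦ hmin hcX
          have h2 : μ (Y /ₘ φ) + μ φ < μ (X /ₘ φ) + μ φ := by
            rw [← hvalY, ← heqv, hvX]
            exact lt_of_not_ge hcX
          exact (WithTop.add_lt_add_iff_right hφt).1 h2
      exact claimZ' μ hn hΦ hm hmin _ (Y /ₘ φ) (X /ₘ φ) le_rfl hgtu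
  have hq_ne : X /ₘ φ + Y /ₘ φ ≠ 0 := by
    intro h0; rw [h0, hn.zero] at htail; exact hn.ne_top huY0 htail.2.symm
  have hdm2 : φ.natDegree ≤ (X + Y).natDegree :=
    div_ne_zero_deg hΦ (by rw [hdiv]; exact hq_ne)
  have hrem : μ Y ≤ μ (X %ₘ φ + Y %ₘ φ) := by
    refine le_trans (le_min ?_ ?_) (hn.addmin (X %ₘ φ) (Y %ₘ φ))
    · rw [← heqv]; exact lemA_mod_ge hn hΦ hmin X
    · rw [hvalY]; exact hcY
  have hcond : μ ((X + Y) /ₘ φ) + μ φ ≤ μ ((X + Y) %ₘ φ) := by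
    rw [hdiv, hmod, htail.2, ← hvalY]
    exact hrem
  constructor
  · rw [sbar_step μ hΦ hm hdm2, if_pos hcond, hdiv, heqY]
    omega
  · rw [lemA hn hΦ hmin (X + Y), hmod, hdiv, htail.2, ← hvalY]
    exact min_eq_right hrem


/-! ### powers, GoodT, Lemma H -/

theorem mu_pow (hn : Nice μ) (p : K[X]) (k : ℕ) : μ (p ^ k) = k • μ p := by
  induction k with
  | zero => simpa using hn.one'
  | succ k ih => rw [pow_succ, hn.mul, ih, succ_nsmul]

theorem nsmul_ne_top {a : WithTop Λ} (ha : a ≠ ⊤) : ∀ N : ℕ, (N • a : WithTop Λ) ≠ ⊤ := by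
  intro N
  induction N with
  | zero => rw [zero_nsmul]; simp
  | succ N ih => rw [succ_nsmul]; exact WithTop.add_ne_top.2 ⟨ih, ha⟩

def GoodT (μ : K[X] → WithTop Λ) (φ : K[X]) : ℕ → K[X] → Prop
  | 0, z => z = 1
  | N+1, z => GoodT μ φ N (z /ₘ φ) ∧ μ z = μ (z /ₘ φ) + μ φ ∧
      z.natDegree ≤ φ.natDegree * (N+1)

theorem goodT_val (hn : Nice μ) {φ : K[X]} :
    ∀ N (z : K[X]), GoodT μ φ N z → μ z = N • μ φ := by
  intro N
  induction N with
  | zero => intro z hz; rw [hz, hn.one', zero_nsmul]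
  | succ N ih => intro z hz; rw [hz.2.1, ih _ hz.1, succ_nsmul]

theorem goodT_ne_zero (hn : Nice μ) (hΦ : φ.Monic) {N : ℕ} {z : K[X]}
    (hz : GoodT μ φ N z) : z ≠ 0 := by
  intro h0
  have hv := goodT_val hn N z hz
  rw [h0, hn.zero] at hv
  exact nsmul_ne_top (hn.ne_top hΦ.ne_zero) N hv.symm

theorem lemH (hn : Nice μ) {b : K[X]} (hb : b.Monic) (hbmin : MuMinimal μ b) :
    ∀ k (h : K[X]), h.Monic → h.natDegree = b.natDegree * k → μ h ≤ k • μ b := by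
  intro k
  induction k with
  | zero =>
    intro h hh hd
    rw [hh.natDegree_eq_zero.1 (by simpa using hd), hn.one', zero_nsmul]
  | succ k ih =>
    intro h hh hd
    have hge : b.natDegree ≤ h.natDegree := by rw [hd, Nat.mul_succ]; omega
    have hu := monic_div hb hh hge
    have hdu : (h /ₘ b).natDegree = b.natDegree * k := by
      rw [natDegree_divByMonic h hb, hd, Nat.mul_succ]; omega
    have hih := ih (h /ₘ b) hu hdu
    refine le_trans (lemA_div_ge hn hb hbmin h) ?_
    rw [succ_nsmul]
    exact add_le_add_left hih (μ b)

theorem g1 (hn : Nice μ) (hΦ : φ.Monic) (hmin : MuMinimal μ φ) :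
    ∀ N (z : K[X]), z.Monic → z.natDegree = φ.natDegree * N → μ z = N • μ φ →
      GoodT μ φ N z := by
  intro N
  induction N with
  | zero =>
    intro z hz hd _
    exact hz.natDegree_eq_zero.1 (by simpa using hd)
  | succ N ih =>
    intro z hz hd hv
    have hge : φ.natDegree ≤ z.natDegree := by rw [hd, Nat.mul_succ]; omega
    have hsm := monic_div hΦ hz hge
    have hds : (z /ₘ φ).natDegree = φ.natDegree * N := by
      rw [natDegree_divByMonic z hΦ, hd, Nat.mul_succ]; omega
    have hH := lemH hn hΦ hmin N (z /ₘ φ) hsm hds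
    have h1 : μ z ≤ μ (z /ₘ φ) + μ φ := lemA_div_ge hn hΦ hmin z
    have h3 : (N+1) • μ φ = N • μ φ + μ φ := succ_nsmul _ _
    have h4 : μ (z /ₘ φ) + μ φ = μ z := by
      refine le_antisymm ?_ h1
      rw [hv, h3]
      exact add_le_add_left hH (μ φ)
    have h5 : μ (z /ₘ φ) = N • μ φ := by
      have h6 : μ (z /ₘ φ) + μ φ = N • μ φ + μ φ := by rw [h4, hv, h3]
      exact WithTop.add_right_cancel (hn.ne_top hΦ.ne_zero) h6
    exact ⟨ih _ hsm hds h5, h4.symm, le_of_eq hd⟩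

/-! ### Good representatives -/

def IsMinRep (μ : K[X] → WithTop Λ) (w : K[X]) : Prop :=
  ∀ w', MuEquiv μ w w' → w.natDegree ≤ w'.natDegree

inductive GoodRep (μ : K[X] → WithTop Λ) (φ : K[X]) : K[X] → Prop
  | small (w : K[X]) (h0 : w ≠ 0) (hd : w.natDegree < φ.natDegree) (hmr : IsMinRep μ w) :
      GoodRep μ φ w
  | big0 (w : K[X]) (h0 : w ≠ 0) (hd : φ.natDegree ≤ w.natDegree)
      (hb : w %ₘ φ = 0) (hu : GoodRep μ φ (w /ₘ φ)) : GoodRep μ φ w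
  | big1 (w : K[X]) (h0 : w ≠ 0) (hd : φ.natDegree ≤ w.natDegree)
      (hbr : GoodRep μ φ (w %ₘ φ)) (hu : GoodRep μ φ (w /ₘ φ)) : GoodRep μ φ w

theorem GoodRep.ne_zero' {w : K[X]} (h : GoodRep μ φ w) : w ≠ 0 := by
  cases h with
  | small w h0 hd hmr => exact h0
  | big0 w h0 hd hb hu => exact h0
  | big1 w h0 hd hbr hu => exact h0

theorem minrep_exists (hn : Nice μ) (w : K[X]) (h0 : w ≠ 0) :
    ∃ w', MuEquiv μ w w' ∧ w'.natDegree ≤ w.natDegree ∧ IsMinRep μ w' ∧ w' ≠ 0 := by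
  classical
  have hne : Set.Nonempty {d | ∃ w', MuEquiv μ w w' ∧ w'.natDegree = d} :=
    ⟨w.natDegree, w, me_refl hn h0, rfl⟩
  have hmem := Nat.sInf_mem hne
  simp only [Set.mem_setOf_eq] at hmem
  obtain ⟨w', hww', hdw'⟩ := hmem
  refine ⟨w', hww', ?_, ?_, me_ne_zero_right hn hww'⟩
  · rw [hdw']
    exact Nat.sInf_le ⟨w, me_refl hn h0, rfl⟩
  · intro w'' h''
    rw [hdw']
    exact Nat.sInf_le ⟨w'', me_trans hn hww' h'', rfl⟩

theorem norm_exists (hn : Nice μ) (hΦ : φ.Monic) (hm : 1 ≤ φ.natDegree)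
    (hmin : MuMinimal μ φ) :
    ∀ n (w : K[X]), w.natDegree ≤ n → w ≠ 0 →
      ∃ w', MuEquiv μ w w' ∧ w'.natDegree ≤ w.natDegree ∧ GoodRep μ φ w' := by
  have hφt : μ φ ≠ ⊤ := hn.ne_top hΦ.ne_zero
  intro n
  induction n using Nat.strong_induction_on with
  | _ n IH =>
  intro w hdn h0
  by_cases hd : w.natDegree < φ.natDegree
  · obtain ⟨w', h1, h2, h3, h4⟩ := minrep_exists hn w h0
    exact ⟨w', h1, h2, GoodRep.small w' h4 (lt_of_le_of_lt h2 hd) h3⟩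
  · push_neg at hd
    have hu0 : w /ₘ φ ≠ 0 := by
      intro hu
      have hlt := (divByMonic_eq_zero_iff hΦ).1 hu
      rw [degree_eq_natDegree h0, degree_eq_natDegree hΦ.ne_zero] at hlt
      exact absurd hlt (by exact_mod_cast not_lt.2 hd)
    have hdu : (w /ₘ φ).natDegree = w.natDegree - φ.natDegree := natDegree_divByMonic w hΦ
    have hult : (w /ₘ φ).natDegree < n := by omega
    obtain ⟨u', hu1, hu2, hu3⟩ := IH _ hult (w /ₘ φ) le_rfl hu0
    have hu'0 : u' ≠ 0 := hu3.ne_zero'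
    have hid := modByMonic_add_div w φ
    by_cases hb : w %ₘ φ = 0
    · have hequiv : MuEquiv μ w (u' * φ) := by
        show μ w < μ (w - u' * φ)
        have e : w - u' * φ = (w /ₘ φ - u') * φ := by linear_combination hb - hid
        rw [e, hn.mul]
        have hw : μ w = μ (w /ₘ φ) + μ φ := by
          rw [lemA hn hΦ hmin w, hb, hn.zero]
          exact min_eq_right le_top
        rw [hw]
        exact WithTop.add_lt_add_right hφt hu1
      obtain ⟨hdivc, hmodc⟩ := mul_div_cancel' hΦ hm u'
      refine ⟨u' * φ, hequiv, ?_, ?_⟩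
      · rw [natDegree_mul hu'0 hΦ.ne_zero]; omega
      · refine GoodRep.big0 _ (mul_ne_zero hu'0 hΦ.ne_zero) ?_ hmodc ?_
        · rw [natDegree_mul hu'0 hΦ.ne_zero]; omega
        · rw [hdivc]; exact hu3
    · obtain ⟨b', hb1, hb2, hb3, hb4⟩ := minrep_exists hn (w %ₘ φ) hb
      have hdb' : b'.natDegree < φ.natDegree := lt_of_le_of_lt hb2 (natdeg_mod_lt hΦ hm w)
      have hdb'' : degree b' < degree φ := degree_lt_degree hdb'
      obtain ⟨hdivc, hmodc⟩ := unique_div_mod hΦ (X := b') (Y := u') hdb''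
      have hequiv : MuEquiv μ w (b' + u' * φ) := by
        show μ w < μ (w - (b' + u' * φ))
        have e : w - (b' + u' * φ) = (w %ₘ φ - b') + (w /ₘ φ - u') * φ := by
          linear_combination -hid
        rw [e]
        have k1 : μ w < μ (w %ₘ φ - b') :=
          lt_of_le_of_lt (lemA_mod_ge hn hΦ hmin w) hb1
        have k2 : μ w < μ ((w /ₘ φ - u') * φ) := by
          rw [hn.mul]
          exact lt_of_le_of_lt (lemA_div_ge hn hΦ hmin w)
            (WithTop.add_lt_add_right hφt hu1)
        exact lt_of_lt_of_le (lt_min k1 k2) (hn.addmin _ _)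
      have hdlt : degree b' < degree (u' * φ) := by
        rw [degree_mul]
        exact lt_of_lt_of_le hdb''
          (le_add_of_nonneg_left (zero_le_degree_iff.2 hu'0))
      have hdeq : (b' + u' * φ).natDegree = (u' * φ).natDegree :=
        natDegree_eq_of_degree_eq (degree_add_eq_right_of_degree_lt hdlt)
      have hdum : (u' * φ).natDegree = u'.natDegree + φ.natDegree :=
        natDegree_mul hu'0 hΦ.ne_zero
      refine ⟨b' + u' * φ, hequiv, ?_, ?_⟩
      · omega
      · refine GoodRep.big1 _ (me_ne_zero_right hn hequiv) (by omega) ?_ ?_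
        · rw [hmodc]; exact GoodRep.small b' hb4 hdb' hb3
        · rw [hdivc]; exact hu3


/-! ### The main induction -/

theorem mainU (hn : Nice μ) (hΦ : φ.Monic) (hm : 1 ≤ φ.natDegree) (hmin : MuMinimal μ φ) :
    ∀ N (z : K[X]), GoodT μ φ N z →
      ∀ n (w : K[X]), w.natDegree ≤ n → GoodRep μ φ w →
        N + sbar μ φ w ≤ sbar μ φ (w * z) := by
  have hφt : μ φ ≠ ⊤ := hn.ne_top hΦ.ne_zero
  intro N
  induction N with
  | zero =>
    intro z hz n w _ hw
    have hz1 : z = 1 := hz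
    rw [hz1, mul_one]
    omega
  | succ N IHN =>
    intro z hz n
    induction n using Nat.strong_induction_on with
    | _ n IHn =>
    intro w hdn hw
    obtain ⟨hzs, hzv, hzd⟩ := id hz
    have hTt : (N • μ φ : WithTop Λ) ≠ ⊤ := nsmul_ne_top hφt N
    have hz0 : z ≠ 0 := goodT_ne_zero hn hΦ hz
    have hs0 : z /ₘ φ ≠ 0 := goodT_ne_zero hn hΦ hzs
    have hzval : μ z = (N + 1) • μ φ := goodT_val hn _ z hz
    have hsval : μ (z /ₘ φ) = N • μ φ := goodT_val hn _ (z /ₘ φ) hzs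
    have hidz := modByMonic_add_div z φ
    cases hw with
    | small w hw0 hwd hmr =>
      -- core case : `w` has degree < deg φ and is a minimal-degree representative
      have hsbw : sbar μ φ w = 0 := sbar_small μ hn hΦ hwd
      have hws0 : w * (z /ₘ φ) ≠ 0 := mul_ne_zero hw0 hs0
      have hwsval : μ (w * (z /ₘ φ)) = μ w + N • μ φ := by rw [hn.mul, hsval]
      have hwst : μ (w * (z /ₘ φ)) ≠ ⊤ := hn.ne_top hws0
      have hidwr := modByMonic_add_div (w * (z %ₘ φ)) φ
      have e : w * z = (w * (z %ₘ φ)) %ₘ φ +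
          ((w * (z %ₘ φ)) /ₘ φ + w * (z /ₘ φ)) * φ := by
        linear_combination -hidwr - w * hidz
      have hdm : (w * z) /ₘ φ = (w * (z %ₘ φ)) /ₘ φ + w * (z /ₘ φ) ∧
          (w * z) %ₘ φ = (w * (z %ₘ φ)) %ₘ φ := by
        rw [e]
        exact unique_div_mod hΦ (degree_modByMonic_lt (w * (z %ₘ φ)) hΦ)
      have hrge : μ w + μ z ≤ μ (w * (z %ₘ φ)) := by
        rw [hn.mul]
        exact add_le_add_right (lemA_mod_ge hn hΦ hmin z) (μ w)
      have hc0ge : μ w + μ z ≤ μ ((w * (z %ₘ φ)) %ₘ φ) :=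
        le_trans hrge (lemA_mod_ge hn hΦ hmin _)
      have hc1ge : μ (w * (z /ₘ φ)) ≤ μ ((w * (z %ₘ φ)) /ₘ φ) := by
        have h1 : μ w + μ z ≤ μ ((w * (z %ₘ φ)) /ₘ φ) + μ φ :=
          le_trans hrge (lemA_div_ge hn hΦ hmin _)
        have h2 : μ w + μ z = μ (w * (z /ₘ φ)) + μ φ := by
          rw [hzv, hn.mul, add_assoc]
        rw [h2] at h1
        exact (WithTop.add_le_add_iff_right hφt).1 h1
      have hIHs : N ≤ sbar μ φ (w * (z /ₘ φ)) := by
        have := IHN (z /ₘ φ) hzs n w hdn (GoodRep.small w hw0 hwd hmr)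
        omega
      -- establish the tail property
      have htail : N ≤ sbar μ φ ((w * (z %ₘ φ)) /ₘ φ + w * (z /ₘ φ)) ∧
          μ ((w * (z %ₘ φ)) /ₘ φ + w * (z /ₘ φ)) = μ (w * (z /ₘ φ)) := by
        rcases eq_or_lt_of_le hc1ge with heq | hlt
        · -- equal values
          have hc1ne : (w * (z %ₘ φ)) /ₘ φ ≠ 0 := by
            intro h0
            rw [h0, hn.zero] at heq
            exact hwst heq
          have hr0 : z %ₘ φ ≠ 0 := by
            intro h0
            rw [h0, mul_zero, zero_divByMonic] at hc1ne
            exact hc1ne rfl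
          have hdc1 : ((w * (z %ₘ φ)) /ₘ φ).natDegree =
              w.natDegree + (z %ₘ φ).natDegree - φ.natDegree := by
            rw [natDegree_divByMonic _ hΦ, natDegree_mul hw0 hr0]
          have hdrm : (z %ₘ φ).natDegree < φ.natDegree := natdeg_mod_lt hΦ hm z
          have hge1 : φ.natDegree ≤ (w * (z %ₘ φ)).natDegree := div_ne_zero_deg hΦ hc1ne
          have hmul1 : (w * (z %ₘ φ)).natDegree = w.natDegree + (z %ₘ φ).natDegree :=
            natDegree_mul hw0 hr0
          rcases Nat.eq_zero_or_pos N with hN0 | hNpos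
          · -- N = 0 : use minimality of the representative w
            subst hN0
            have hs1 : z /ₘ φ = 1 := hzs
            rw [hs1, mul_one] at hwsval hws0 hwst heq ⊢
            have hval : μ ((w * (z %ₘ φ)) /ₘ φ + w) = μ w := by
              have hge : μ w ≤ μ ((w * (z %ₘ φ)) /ₘ φ + w) := by
                refine le_trans (le_min ?_ ?_) (hn.addmin _ _)
                · rw [← heq, hwsval, zero_nsmul, add_zero]
                · exact le_rfl
              rcases eq_or_lt_of_le hge with h | h
              · exact h.symm
              · exfalso
                have hequiv : MuEquiv μ w (-((w * (z %ₘ φ)) /ₘ φ)) := by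
                  show μ w < μ (w - -((w * (z %ₘ φ)) /ₘ φ))
                  rw [sub_neg_eq_add, add_comm]
                  exact h
                have := hmr _ hequiv
                rw [natDegree_neg] at this
                omega
            exact ⟨Nat.zero_le _, by rw [hval, hwsval]⟩
          · -- N ≥ 1 : use claim Z
            have hsbc1 : sbar μ φ ((w * (z %ₘ φ)) /ₘ φ) = 0 :=
              sbar_small μ hn hΦ (by omega)
            have hZ := claimZ μ hn hΦ hm hmin (w * (z /ₘ φ)).natDegree
              (w * (z /ₘ φ)) ((w * (z %ₘ φ)) /ₘ φ) le_rfl heq.symm (by omega)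
            exact ⟨le_trans hIHs hZ.1, hZ.2⟩
        · -- strictly larger value : use claim Z'
          have hZ := claimZ' μ hn hΦ hm hmin (w * (z /ₘ φ)).natDegree
            (w * (z /ₘ φ)) ((w * (z %ₘ φ)) /ₘ φ) le_rfl hlt
          exact ⟨le_trans hIHs hZ.1, hZ.2⟩
      have hQne : (w * (z %ₘ φ)) /ₘ φ + w * (z /ₘ φ) ≠ 0 := by
        intro h0
        rw [h0, hn.zero] at htail
        exact hwst htail.2.symm
      have hdm2 : φ.natDegree ≤ (w * z).natDegree :=
        div_ne_zero_deg hΦ (by rw [hdm.1]; exact hQne)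
      have hcond : μ ((w * z) /ₘ φ) + μ φ ≤ μ ((w * z) %ₘ φ) := by
        rw [hdm.1, hdm.2, htail.2]
        have h2 : μ (w * (z /ₘ φ)) + μ φ = μ w + μ z := by
          rw [hzv, hn.mul, add_assoc]
        rw [h2]
        exact hc0ge
      rw [sbar_step μ hΦ hm hdm2, if_pos hcond, hdm.1, hsbw]
      have := htail.1
      omega
    | big0 w hw0 hwd hb hu =>
      have hu0 : w /ₘ φ ≠ 0 := hu.ne_zero'
      have hidw := modByMonic_add_div w φ
      have e : w * z = w /ₘ φ * z * φ := by
        linear_combination z * hb - z * hidw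
      have huzne : w /ₘ φ * z ≠ 0 := mul_ne_zero hu0 hz0
      have hdu : (w /ₘ φ).natDegree = w.natDegree - φ.natDegree := natDegree_divByMonic w hΦ
      have hIHu := IHn ((w /ₘ φ).natDegree) (by omega) (w /ₘ φ) le_rfl hu
      have hsw : sbar μ φ w = sbar μ φ (w /ₘ φ) + 1 := by
        rw [sbar_step μ hΦ hm hwd, hb, hn.zero, if_pos le_top]
      rw [e, sbar_mul_phi μ hn hΦ hm huzne, hsw]
      omega
    | big1 w hw0 hwd hbr hu =>
      have hu0 : w /ₘ φ ≠ 0 := hu.ne_zero'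
      have hb0 : w %ₘ φ ≠ 0 := hbr.ne_zero'
      have hbt : μ (w %ₘ φ) ≠ ⊤ := hn.ne_top hb0
      have hut : μ (w /ₘ φ) ≠ ⊤ := hn.ne_top hu0
      have hidw := modByMonic_add_div w φ
      have hdb : (w %ₘ φ).natDegree < φ.natDegree := natdeg_mod_lt hΦ hm w
      have hdu : (w /ₘ φ).natDegree = w.natDegree - φ.natDegree := natDegree_divByMonic w hΦ
      -- apply the inner induction to `b = w %ₘ φ` and `u = w /ₘ φ`
      have hIHb := IHn ((w %ₘ φ).natDegree) (by omega) (w %ₘ φ) le_rfl hbr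
      have hIHu := IHn ((w /ₘ φ).natDegree) (by omega) (w /ₘ φ) le_rfl hu
      have hsbb : sbar μ φ (w %ₘ φ) = 0 := sbar_small μ hn hΦ hdb
      rw [hsbb] at hIHb
      have hbz1 : 1 ≤ sbar μ φ (w %ₘ φ * z) := by omega
      obtain ⟨hdmbz, hcbz, heqbz⟩ := sbar_pos μ hn hΦ hm hbz1
      have hidbz := modByMonic_add_div (w %ₘ φ * z) φ
      have hsD : N ≤ sbar μ φ ((w %ₘ φ * z) /ₘ φ) := by omega
      have hvalbz : μ (w %ₘ φ * z) = μ ((w %ₘ φ * z) /ₘ φ) + μ φ :=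
        lemA_of_cond hn hΦ hmin hcbz
      have hDval : μ ((w %ₘ φ * z) /ₘ φ) = μ (w %ₘ φ) + N • μ φ := by
        have h1 : μ ((w %ₘ φ * z) /ₘ φ) + μ φ = (μ (w %ₘ φ) + N • μ φ) + μ φ := by
          rw [← hvalbz, hn.mul, hzval, succ_nsmul, ← add_assoc]
        exact WithTop.add_right_cancel hφt h1
      have hDt : μ ((w %ₘ φ * z) /ₘ φ) ≠ ⊤ := by
        rw [hDval]
        exact WithTop.add_ne_top.2 ⟨hbt, hTt⟩
      have hD0 : (w %ₘ φ * z) /ₘ φ ≠ 0 := fun h0 => hDt (by rw [h0, hn.zero])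
      have hbz0 : w %ₘ φ * z ≠ 0 := mul_ne_zero hb0 hz0
      -- upper bound for sbar D
      have hsDle : sbar μ φ ((w %ₘ φ * z) /ₘ φ) ≤ N := by
        have h1 := sbar_deg μ hn hΦ hm ((w %ₘ φ * z) /ₘ φ).natDegree
          ((w %ₘ φ * z) /ₘ φ) le_rfl hD0
        have h2 : ((w %ₘ φ * z) /ₘ φ).natDegree = (w %ₘ φ * z).natDegree - φ.natDegree :=
          natDegree_divByMonic _ hΦ
        have h3 : (w %ₘ φ * z).natDegree = (w %ₘ φ).natDegree + z.natDegree :=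
          natDegree_mul hb0 hz0
        have h4 : φ.natDegree * sbar μ φ ((w %ₘ φ * z) /ₘ φ) < φ.natDegree * (N + 1) := by
          have : (w %ₘ φ).natDegree + z.natDegree - φ.natDegree < φ.natDegree * (N + 1) := by
            omega
          omega
        have := Nat.lt_of_mul_lt_mul_left h4
        omega
      have huz0 : w /ₘ φ * z ≠ 0 := mul_ne_zero hu0 hz0
      have huzval : μ (w /ₘ φ * z) = (μ (w /ₘ φ) + μ φ) + N • μ φ := by
        rw [hn.mul, hzval, succ_nsmul, add_comm (N • μ φ) (μ φ), ← add_assoc]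
      have huzt : μ (w /ₘ φ * z) ≠ ⊤ := hn.ne_top huz0
      -- decomposition of w * z
      have e : w * z = (w %ₘ φ * z) %ₘ φ +
          ((w %ₘ φ * z) /ₘ φ + w /ₘ φ * z) * φ := by
        linear_combination -hidbz - z * hidw
      have hdm : (w * z) /ₘ φ = (w %ₘ φ * z) /ₘ φ + w /ₘ φ * z ∧
          (w * z) %ₘ φ = (w %ₘ φ * z) %ₘ φ := by
        rw [e]
        exact unique_div_mod hΦ (degree_modByMonic_lt (w %ₘ φ * z) hΦ)
      rcases lt_trichotomy (μ ((w %ₘ φ * z) /ₘ φ)) (μ (w /ₘ φ * z)) with hlt | heq | hgt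
      · -- μ D < μ (u z) : w's 0-coefficient dominates, sbar w = 0
        have hsw : sbar μ φ w = 0 := by
          have hblt : ¬ (μ (w /ₘ φ) + μ φ ≤ μ (w %ₘ φ)) := by
            intro hc
            have h1 : μ (w %ₘ φ) + N • μ φ < (μ (w /ₘ φ) + μ φ) + N • μ φ := by
              rw [← hDval, ← huzval]; exact hlt
            have h2 := (WithTop.add_lt_add_iff_right hTt).1 h1
            exact absurd hc (not_le.2 h2)
          rw [sbar_step μ hΦ hm hwd, if_neg hblt]
        have hZ := claimZ' μ hn hΦ hm hmin ((w %ₘ φ * z) /ₘ φ).natDegree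
          ((w %ₘ φ * z) /ₘ φ) (w /ₘ φ * z) le_rfl hlt
        have hcomm : w /ₘ φ * z + (w %ₘ φ * z) /ₘ φ = (w %ₘ φ * z) /ₘ φ + w /ₘ φ * z := by
          ring
        rw [hcomm] at hZ
        have hQne : (w %ₘ φ * z) /ₘ φ + w /ₘ φ * z ≠ 0 := by
          intro h0
          rw [h0, hn.zero] at hZ
          exact hDt hZ.2.symm
        have hdm2 : φ.natDegree ≤ (w * z).natDegree :=
          div_ne_zero_deg hΦ (by rw [hdm.1]; exact hQne)
        have hcond : μ ((w * z) /ₘ φ) + μ φ ≤ μ ((w * z) %ₘ φ) := by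
          rw [hdm.1, hdm.2, hZ.2, ← hvalbz]
          exact lemA_mod_ge hn hΦ hmin _
        rw [sbar_step μ hΦ hm hdm2, if_pos hcond, hdm.1, hsw]
        have := hZ.1
        omega
      · -- equal values : use claim Z
        have hsw : sbar μ φ w = sbar μ φ (w /ₘ φ) + 1 := by
          have hbeq : μ (w /ₘ φ) + μ φ = μ (w %ₘ φ) := by
            have h1 : (μ (w /ₘ φ) + μ φ) + N • μ φ = μ (w %ₘ φ) + N • μ φ := by
              rw [← hDval, ← huzval]; exact heq.symm
            exact WithTop.add_right_cancel hTt h1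
          rw [sbar_step μ hΦ hm hwd, if_pos (le_of_eq hbeq)]
        have hsltu : sbar μ φ ((w %ₘ φ * z) /ₘ φ) < sbar μ φ (w /ₘ φ * z) := by omega
        have hZ := claimZ μ hn hΦ hm hmin (w /ₘ φ * z).natDegree
          (w /ₘ φ * z) ((w %ₘ φ * z) /ₘ φ) le_rfl heq hsltu
        have hQne : (w %ₘ φ * z) /ₘ φ + w /ₘ φ * z ≠ 0 := by
          intro h0
          rw [h0, hn.zero] at hZ
          exact huzt hZ.2.symm
        have hdm2 : φ.natDegree ≤ (w * z).natDegree :=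
          div_ne_zero_deg hΦ (by rw [hdm.1]; exact hQne)
        have hcond : μ ((w * z) /ₘ φ) + μ φ ≤ μ ((w * z) %ₘ φ) := by
          rw [hdm.1, hdm.2, hZ.2, ← heq, ← hvalbz]
          exact lemA_mod_ge hn hΦ hmin _
        rw [sbar_step μ hΦ hm hdm2, if_pos hcond, hdm.1, hsw]
        have := hZ.1
        omega
      · -- μ (u z) < μ D
        have hsw : sbar μ φ w = sbar μ φ (w /ₘ φ) + 1 := by
          have hblt : μ (w /ₘ φ) + μ φ ≤ μ (w %ₘ φ) := by
            have h1 : (μ (w /ₘ φ) + μ φ) + N • μ φ < μ (w %ₘ φ) + N • μ φ := by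
              rw [← hDval, ← huzval]; exact hgt
            exact ((WithTop.add_lt_add_iff_right hTt).1 h1).le
          rw [sbar_step μ hΦ hm hwd, if_pos hblt]
        have hZ := claimZ' μ hn hΦ hm hmin (w /ₘ φ * z).natDegree
          (w /ₘ φ * z) ((w %ₘ φ * z) /ₘ φ) le_rfl hgt
        have hQne : (w %ₘ φ * z) /ₘ φ + w /ₘ φ * z ≠ 0 := by
          intro h0
          rw [h0, hn.zero] at hZ
          exact huzt hZ.2.symm
        have hdm2 : φ.natDegree ≤ (w * z).natDegree :=
          div_ne_zero_deg hΦ (by rw [hdm.1]; exact hQne)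
        have hcond : μ ((w * z) /ₘ φ) + μ φ ≤ μ ((w * z) %ₘ φ) := by
          rw [hdm.1, hdm.2, hZ.2]
          refine le_trans ?_ (lemA_mod_ge hn hΦ hmin (w %ₘ φ * z))
          rw [hvalbz]
          exact add_le_add_left hgt.le (μ φ)
        rw [sbar_step μ hΦ hm hdm2, if_pos hcond, hdm.1, hsw]
        have := hZ.1
        omega

end S2Aux


/-- Weight bound: `deg φ • μ f ≤ deg f • μ φ` for monic non-constant `f`,
with equality iff `f` is `μ`-minimal. -/
theorem statement_2 {K : Type*} [Field K] {Λ : Type*} [AddCommGroup Λ] [LinearOrder Λ] [IsOrderedAddMonoid Λ]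
    (v : K → WithTop Λ) (hv : IsVal v)
    (μ : K[X] → WithTop Λ) (hμ : IsValExt v μ)
    (φ : K[X]) (hφ : IsKeyPol μ φ)
    (f : K[X]) (hmon : f.Monic) (hdeg : 0 < f.degree) :
    φ.natDegree • μ f ≤ f.natDegree • μ φ ∧
      (φ.natDegree • μ f = f.natDegree • μ φ ↔ MuMinimal μ f) := by
  obtain ⟨hΦ, hminφ, hirr⟩ := hφ
  have hn : S2Aux.Nice μ := S2Aux.nice_of hv hμ
  have hm : 1 ≤ φ.natDegree := by
    by_contra hc
    push_neg at hc
    have hφ1 : φ = 1 := hΦ.natDegree_eq_zero.1 (by omega)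
    exact hirr.2.1 ⟨1, by
      rw [hφ1, mul_one]
      exact S2Aux.me_refl hn one_ne_zero⟩
  have hf0 : f ≠ 0 := hmon.ne_zero
  have hn1 : 1 ≤ f.natDegree := natDegree_pos_iff_degree_pos.2 hdeg
  have hineq : φ.natDegree • μ f ≤ f.natDegree • μ φ := by
    have h1 := S2Aux.lemH hn hΦ hminφ f.natDegree (f ^ φ.natDegree) (hmon.pow _)
      (hmon.natDegree_pow _)
    rwa [S2Aux.mu_pow hn] at h1
  have heq_of_min : MuMinimal μ f → φ.natDegree • μ f = f.natDegree • μ φ := by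
    intro hfmin
    refine le_antisymm hineq ?_
    have h1 := S2Aux.lemH hn hmon hfmin φ.natDegree (φ ^ f.natDegree) (hΦ.pow _)
      (hΦ.natDegree_pow _)
    rwa [S2Aux.mu_pow hn] at h1
  have hmin_of_eq : φ.natDegree • μ f = f.natDegree • μ φ → MuMinimal μ f := by
    intro heq g hg0 hgdeg hdvd
    obtain ⟨q, hq⟩ := hdvd
    have hq0 : q ≠ 0 := by
      intro h0
      rw [h0, zero_mul] at hq
      exact S2Aux.me_ne_zero_right hn hq rfl
    have hzmon : (f ^ φ.natDegree).Monic := hmon.pow _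
    have hzdeg : (f ^ φ.natDegree).natDegree = φ.natDegree * f.natDegree := hmon.natDegree_pow _
    have hzval : μ (f ^ φ.natDegree) = f.natDegree • μ φ := by
      rw [S2Aux.mu_pow hn, heq]
    have hgood := S2Aux.g1 hn hΦ hminφ f.natDegree (f ^ φ.natDegree) hzmon hzdeg hzval
    have hPequiv : MuEquiv μ (g ^ φ.natDegree) (q ^ φ.natDegree * f ^ φ.natDegree) := by
      have hp := S2Aux.me_pow hn hq (φ.natDegree - 1)
      have hmm : φ.natDegree - 1 + 1 = φ.natDegree := by omega
      rw [hmm, mul_pow] at hp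
      exact hp
    have hqm0 : q ^ φ.natDegree ≠ 0 := pow_ne_zero _ hq0
    obtain ⟨w', hw1, hw2, hw3⟩ := S2Aux.norm_exists hn hΦ hm hminφ (q ^ φ.natDegree).natDegree
      (q ^ φ.natDegree) le_rfl hqm0
    have hz0 : f ^ φ.natDegree ≠ 0 := hzmon.ne_zero
    have hwz : MuEquiv μ (q ^ φ.natDegree * f ^ φ.natDegree) (w' * f ^ φ.natDegree) :=
      S2Aux.me_mul hn hw1 (S2Aux.me_refl hn hz0)
    have hPW : MuEquiv μ (g ^ φ.natDegree) (w' * f ^ φ.natDegree) :=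
      S2Aux.me_trans hn hPequiv hwz
    have hU := S2Aux.mainU hn hΦ hm hminφ f.natDegree (f ^ φ.natDegree) hgood
      w'.natDegree w' le_rfl hw3
    have hsb := S2Aux.me_sbar μ hn hΦ hm hminφ (g ^ φ.natDegree).natDegree (g ^ φ.natDegree)
      (w' * f ^ φ.natDegree) le_rfl hPW
    have hgP0 : g ^ φ.natDegree ≠ 0 := pow_ne_zero _ hg0
    have hdegP := S2Aux.sbar_deg μ hn hΦ hm (g ^ φ.natDegree).natDegree (g ^ φ.natDegree)
      le_rfl hgP0
    have hdgP : (g ^ φ.natDegree).natDegree = φ.natDegree * g.natDegree := by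
      rw [natDegree_pow]
    have hglt : g.natDegree < f.natDegree := natDegree_lt_natDegree hg0 hgdeg
    have h1 : f.natDegree ≤ S2Aux.sbar μ φ (g ^ φ.natDegree) := by omega
    have h2 : φ.natDegree * f.natDegree ≤ φ.natDegree * g.natDegree := by
      calc φ.natDegree * f.natDegree ≤ φ.natDegree * S2Aux.sbar μ φ (g ^ φ.natDegree) :=
            Nat.mul_le_mul_left _ h1
        _ ≤ (g ^ φ.natDegree).natDegree := hdegP
        _ = φ.natDegree * g.natDegree := hdgP
    have h3 := Nat.le_of_mul_le_mul_left h2 (by omega)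
    omega
  exact ⟨hineq, ⟨hmin_of_eq, heq_of_min⟩⟩
end

section
/- Let (K,v) be a valued field, μ a valuation on K[x] extending v, and φ a key polynomial for μ. Then the map on the field K_φ = K[x]/(φ) defined by sending the class of f ∈ K[x] \ (φ) to μ(a_0), where a_0 is the remainder of the division of f by φ (and sending 0 to ∞), is well defined and is a valuation on K_φ whose restriction to K (via the canonical embedding K → K_φ) equals v. In particular, for all f,g ∈ K[x] not divisible by φ, μ((f·g) mod φ) = μ(f mod φ) + μ(g mod φ). -/
open Polynomial

section Aux

variable {K : Type*} [Field K] {Λ : Type*} [AddCommGroup Λ] [LinearOrder Λ] [IsOrderedAddMonoid Λ]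

lemma aux_val_one (v : K → WithTop Λ) (hv : IsVal v) : v 1 = 0 := by
  have h1 : v 1 = v 1 + v 1 := by simpa using (hv.1 1 1)
  have hne : v 1 ≠ ⊤ := by simp [hv.2.2]
  obtain ⟨a, ha⟩ := WithTop.ne_top_iff_exists.mp hne
  rw [← ha] at h1 ⊢
  norm_cast at h1 ⊢
  exact left_eq_add.mp h1

lemma aux_deg_pos (μ : K[X] → WithTop Λ) (hμ : ∀ c : K, μ (C (1:K)) = 0)
    (hμtop : ∀ f : K[X], μ f = ⊤ ↔ f = 0)
    (φ : K[X]) (hφ : IsKeyPol μ φ) : 0 < φ.degree := by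
  by_contra h
  push_neg at h
  have hφ1 : φ = 1 := by
    have := hφ.1
    have hd : φ.natDegree = 0 := natDegree_eq_zero_iff_degree_le_zero.mpr h
    exact this.natDegree_eq_zero.mp hd
  apply hφ.2.2.2.1
  refine ⟨1, ?_⟩
  unfold MuEquiv
  rw [hφ1]
  have : (1 : K[X]) - 1 * 1 = 0 := by ring
  rw [this]
  have h1 : μ 1 = 0 := by simpa using hμ 1
  have h0 : μ 0 = ⊤ := (hμtop 0).mpr rfl
  rw [h1, h0]
  exact WithTop.coe_lt_top 0

/-- If `φ` does not `μ`-divide `h`, then the remainder of `h` mod `φ` has the same value. -/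
lemma aux_mu_mod_eq (μ : K[X] → WithTop Λ) (hμmul : ∀ f g : K[X], μ (f * g) = μ f + μ g)
    (hμtop : ∀ f : K[X], μ f = ⊤ ↔ f = 0)
    (φ : K[X]) (hm : φ.Monic) (hmin : MuMinimal μ φ)
    (h : K[X]) (hnd : ¬ MuDvd μ φ h) : μ (h %ₘ φ) = μ h := by
  set R := h %ₘ φ with hR
  set Q := h /ₘ φ with hQ
  have hkey : R + φ * Q = h := modByMonic_add_div h φ
  rcases lt_trichotomy (μ R) (μ h) with hlt | heq | hgt
  · exfalso
    have hRne : R ≠ 0 := by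
      intro h0
      rw [h0, hμtop 0 |>.mpr rfl] at hlt
      exact (not_top_lt) hlt
    have hdeg : R.degree < φ.degree := degree_modByMonic_lt h hm
    apply hmin R hRne hdeg
    refine ⟨-Q, ?_⟩
    unfold MuEquiv
    have : R - (-Q) * φ = h := by rw [← hkey]; ring
    rwa [this]
  · exact heq
  · exfalso
    apply hnd
    refine ⟨Q, ?_⟩
    unfold MuEquiv
    have : h - Q * φ = R := by rw [← hkey]; ring
    rwa [this]

end Aux

/-- The map sending the class of `f` in `K_φ = K[x]/(φ)` to `μ (f %ₘ φ)`
is well defined and is a valuation on `K_φ` extending `v`; in particular it is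
multiplicative: `μ((f·g) mod φ) = μ(f mod φ) + μ(g mod φ)`. -/
theorem statement_3 {K : Type*} [Field K] {Λ : Type*} [AddCommGroup Λ] [LinearOrder Λ] [IsOrderedAddMonoid Λ]
    (v : K → WithTop Λ) (hv : IsVal v)
    (μ : K[X] → WithTop Λ) (hμ : IsValExt v μ)
    (φ : K[X]) (hφ : IsKeyPol μ φ) :
    (∀ f g : K[X], φ ∣ (f - g) → μ (f %ₘ φ) = μ (g %ₘ φ)) ∧
    (∀ f g : K[X], μ ((f * g) %ₘ φ) = μ (f %ₘ φ) + μ (g %ₘ φ)) ∧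
    (∀ f g : K[X], min (μ (f %ₘ φ)) (μ (g %ₘ φ)) ≤ μ ((f + g) %ₘ φ)) ∧
    (∀ f : K[X], μ (f %ₘ φ) = ⊤ ↔ φ ∣ f) ∧
    (∀ c : K, μ (C c %ₘ φ) = v c) := by
  obtain ⟨hμmul, hμadd, hμtop, hμC⟩ := hμ
  have hm : φ.Monic := hφ.1
  have hmin : MuMinimal μ φ := hφ.2.1
  have hμ1 : ∀ c : K, μ (C (1:K)) = 0 := by
    intro _; rw [hμC 1, aux_val_one v hv]
  have hdegpos : 0 < φ.degree := aux_deg_pos μ hμ1 hμtop φ hφ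
  -- φ does not μ-divide nonzero polynomials of degree < deg φ
  have hsmall : ∀ r : K[X], r ≠ 0 → r.degree < φ.degree → ¬ MuDvd μ φ r := fun r h1 h2 =>
    hmin r h1 h2
  have hmodeq : ∀ f g : K[X], φ ∣ (f - g) → μ (f %ₘ φ) = μ (g %ₘ φ) := by
    intro f g hd
    rw [modByMonic_eq_of_dvd_sub hm hd]
  refine ⟨hmodeq, ?_, ?_, ?_, ?_⟩
  · -- multiplicativity
    intro f g
    set r := f %ₘ φ with hr
    set s := g %ₘ φ with hs
    have hdvd : φ ∣ (f * g - r * s) := by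
      have h1 : φ ∣ f - r := by
        refine ⟨f /ₘ φ, ?_⟩
        have := modByMonic_add_div f φ
        rw [← hr] at this
        linear_combination -this
      have h2 : φ ∣ g - s := by
        refine ⟨g /ₘ φ, ?_⟩
        have := modByMonic_add_div g φ
        rw [← hs] at this
        linear_combination -this
      have : f * g - r * s = (f - r) * g + r * (g - s) := by ring
      rw [this]
      exact dvd_add (Dvd.dvd.mul_right h1 g) (Dvd.dvd.mul_left h2 r)
    rw [hmodeq (f * g) (r * s) hdvd]
    by_cases hr0 : r = 0
    · rw [hr0]
      simp only [zero_mul, zero_modByMonic]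
      rw [(hμtop 0).mpr rfl, top_add]
    by_cases hs0 : s = 0
    · rw [hs0]
      simp only [mul_zero, zero_modByMonic]
      rw [(hμtop 0).mpr rfl, add_top]
    have hndr : ¬ MuDvd μ φ r := hsmall r hr0 (degree_modByMonic_lt f hm)
    have hnds : ¬ MuDvd μ φ s := hsmall s hs0 (degree_modByMonic_lt g hm)
    have hnd : ¬ MuDvd μ φ (r * s) := by
      intro h
      rcases hφ.2.2.2.2 r s h with h' | h'
      · exact hndr h'
      · exact hnds h'
    rw [aux_mu_mod_eq μ hμmul hμtop φ hm hmin (r * s) hnd, hμmul]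
  · -- additivity
    intro f g
    rw [add_modByMonic]
    exact hμadd _ _
  · -- top iff dvd
    intro f
    rw [hμtop, modByMonic_eq_zero_iff_dvd hm]
  · -- constants
    intro c
    have : C c %ₘ φ = C c := by
      rw [modByMonic_eq_self_iff hm]
      exact lt_of_le_of_lt (degree_C_le) hdegpos
    rw [this, hμC]
end

section
/- Let (K,v) be a valued field, μ a valuation on K[x] extending v with values in Λ ∪ {∞}, φ a key polynomial for μ, Λ' a linearly ordered abelian group equipped with an order-preserving group embedding Λ → Λ', and γ ∈ Λ' with μ(φ) < γ. Define μ' : K[x] → Λ' ∪ {∞} on canonical φ-expansions by μ'(Σ_{s≥0} a_s φ^s) = min_{s≥0} (μ(a_s) + s·γ). Then: (a) μ' is a valuation on K[x] extending v, and μ(f) ≤ μ'(f) for all f ∈ K[x], with equality for nonzero f if and only if φ ∤_μ f; (b) φ is a key polynomial for μ', and every key polynomial for μ' has degree at least deg φ. -/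
open Polynomial

section S4Aux

variable {K : Type*} [Field K]

/-- Coefficients of the `φ`-adic expansion. -/
noncomputable def s4coeff (φ : K[X]) : K[X] → ℕ → K[X]
  | f, 0 => f %ₘ φ
  | f, (s+1) => s4coeff φ (f /ₘ φ) s

lemma s4coeff_degree {φ : K[X]} (hm : φ.Monic) : ∀ (s : ℕ) (f : K[X]),
    (s4coeff φ f s).degree < φ.degree := by
  intro s
  induction s with
  | zero => intro f; exact degree_modByMonic_lt f hm
  | succ s ih => intro f; exact ih (f /ₘ φ)

lemma s4coeff_zero (φ : K[X]) : ∀ s, s4coeff φ 0 s = 0 := by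
  intro s
  induction s with
  | zero => simp [s4coeff]
  | succ s ih =>
    show s4coeff φ (0 /ₘ φ) s = 0
    rw [zero_divByMonic]
    exact ih

lemma s4coeff_sum {φ : K[X]} (hm : φ.Monic) (hd : 0 < φ.degree) :
    ∀ (N : ℕ) (f : K[X]), f.natDegree < N →
      ∑ s ∈ Finset.range N, s4coeff φ f s * φ ^ s = f := by
  intro N
  induction N with
  | zero => intro f h; exact absurd h (Nat.not_lt_zero _)
  | succ N ih =>
    intro f hf
    have key : ∑ s ∈ Finset.range N, s4coeff φ (f /ₘ φ) s * φ ^ s = f /ₘ φ := by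
      by_cases hq : f /ₘ φ = 0
      · rw [hq]
        simp [s4coeff_zero]
      · apply ih
        have hf0 : f ≠ 0 := fun h => hq (by rw [h, zero_divByMonic])
        have := natDegree_lt_natDegree hq (degree_divByMonic_lt f φ hf0 hd)
        omega
    calc ∑ s ∈ Finset.range (N+1), s4coeff φ f s * φ ^ s
        = (∑ s ∈ Finset.range N, s4coeff φ (f /ₘ φ) s * φ ^ s) * φ + s4coeff φ f 0 * φ ^ 0 := by
          rw [Finset.sum_range_succ', Finset.sum_mul]
          congr 1
          refine Finset.sum_congr rfl (fun s _ => ?_)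
          show s4coeff φ (f /ₘ φ) s * φ ^ (s+1) = s4coeff φ (f /ₘ φ) s * φ ^ s * φ
          rw [pow_succ, mul_assoc]
      _ = f := by
          rw [key]
          show f /ₘ φ * φ + (f %ₘ φ) * φ ^ 0 = f
          rw [pow_zero, mul_one]
          have := modByMonic_add_div f φ
          linear_combination this

lemma s4_inf_range_succ {α : Type*} [SemilatticeInf α] [OrderTop α] (F : ℕ → α) (N : ℕ) :
    (Finset.range (N+1)).inf F = F 0 ⊓ (Finset.range N).inf (fun s => F (s+1)) := by
  induction N with
  | zero => simp
  | succ N ih =>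
    rw [Finset.range_add_one, Finset.inf_insert, ih, Finset.range_add_one, Finset.inf_insert]
    exact inf_left_comm _ _ _

lemma s4_inf_range_add_const {Ω : Type*} [AddCommGroup Ω] [LinearOrder Ω] [IsOrderedAddMonoid Ω]
    (G : ℕ → WithTop Ω) (c : WithTop Ω) (N : ℕ) :
    (Finset.range N).inf (fun s => G s + c) = (Finset.range N).inf G + c := by
  induction N with
  | zero => simp [top_add]
  | succ N ih =>
    rw [Finset.range_add_one, Finset.inf_insert, Finset.inf_insert, ih]
    exact min_add_add_right _ _ _

variable {Ω : Type*} [AddCommGroup Ω] [LinearOrder Ω] [IsOrderedAddMonoid Ω]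

lemma s4_val_one (ν : K[X] → WithTop Ω)
    (hm : ∀ f g : K[X], ν (f * g) = ν f + ν g)
    (ht : ∀ f : K[X], ν f = ⊤ ↔ f = 0) : ν 1 = 0 := by
  have h1 : ν 1 = ν 1 + ν 1 := by rw [← hm, one_mul]
  have h2 : ν 1 ≠ ⊤ := fun h => one_ne_zero ((ht 1).mp h)
  obtain ⟨c, hc⟩ := WithTop.ne_top_iff_exists.mp h2
  rw [← hc] at h1 ⊢
  have h3 : c = c + c := by exact_mod_cast h1
  have h4 : c + c = c + 0 := by rw [add_zero]; exact h3.symm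
  rw [add_left_cancel h4]
  rfl

lemma s4_val_neg (ν : K[X] → WithTop Ω)
    (hm : ∀ f g : K[X], ν (f * g) = ν f + ν g)
    (ht : ∀ f : K[X], ν f = ⊤ ↔ f = 0) : ∀ f, ν (-f) = ν f := by
  have hone := s4_val_one ν hm ht
  have hn1 : ν (-1) = 0 := by
    have h1 : ν ((-1 : K[X]) * (-1)) = ν (-1) + ν (-1) := hm _ _
    rw [neg_one_mul, neg_neg, hone] at h1
    have h2 : ν (-1 : K[X]) ≠ ⊤ := by
      intro h
      rw [h, top_add] at h1
      exact (by simp : ((0 : WithTop Ω) ≠ ⊤)) h1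
    obtain ⟨c, hc⟩ := WithTop.ne_top_iff_exists.mp h2
    rw [← hc] at h1 ⊢
    have h3 : c + c = (0 : Ω) := by exact_mod_cast h1.symm
    have h4 : c = 0 := by
      rcases lt_trichotomy c 0 with h | h | h
      · exact absurd h3 (ne_of_lt (by simpa using add_lt_add h h))
      · exact h
      · exact absurd h3 (ne_of_gt (by simpa using add_lt_add h h))
    rw [h4]
    rfl
  intro f
  rw [show -f = -1 * f by ring, hm, hn1, zero_add]

lemma s4_add_of_lt (ν : K[X] → WithTop Ω)
    (hu : ∀ f g : K[X], min (ν f) (ν g) ≤ ν (f + g))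
    (hneg : ∀ f, ν (-f) = ν f)
    {f g : K[X]} (h : ν g < ν f) : ν (f + g) = ν g := by
  have low : ν g ≤ ν (f + g) := by
    have := hu f g
    rwa [min_eq_right h.le] at this
  have h2 : min (ν (f + g)) (ν f) ≤ ν g := by
    have h3 := hu (f + g) (-f)
    rw [hneg] at h3
    have e : f + g + -f = g := by ring
    rwa [e] at h3
  rcases le_or_gt (ν (f + g)) (ν g) with h3 | h3
  · exact le_antisymm h3 low
  · exact absurd h2 (not_le.mpr (lt_min h3 h))

lemma s4_E (ν : K[X] → WithTop Ω)
    (hm : ∀ f g : K[X], ν (f * g) = ν f + ν g)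
    (hu : ∀ f g : K[X], min (ν f) (ν g) ≤ ν (f + g))
    (ht : ∀ f : K[X], ν f = ⊤ ↔ f = 0)
    {ψ : K[X]} (hψ : ψ.Monic) (hdψ : 0 < ψ.degree) (hmin : MuMinimal ν ψ) (f : K[X]) :
    ν f = min (ν (f %ₘ ψ)) (ν (f /ₘ ψ) + ν ψ) := by
  have hneg := s4_val_neg ν hm ht
  have hrq : f %ₘ ψ + ψ * (f /ₘ ψ) = f := modByMonic_add_div f ψ
  have hqs : ν (ψ * (f /ₘ ψ)) = ν (f /ₘ ψ) + ν ψ := by rw [hm, add_comm]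
  have hlow : min (ν (f %ₘ ψ)) (ν (f /ₘ ψ) + ν ψ) ≤ ν f := by
    have h0 := hu (f %ₘ ψ) (ψ * (f /ₘ ψ))
    rw [hrq, hqs] at h0
    exact h0
  rcases le_or_gt (ν (f %ₘ ψ)) (ν (ψ * (f /ₘ ψ))) with h | h
  · have hmineq : min (ν (f %ₘ ψ)) (ν (f /ₘ ψ) + ν ψ) = ν (f %ₘ ψ) := by
      rw [← hqs]; exact min_eq_left h
    rw [hmineq] at hlow ⊢
    rcases lt_or_eq_of_le hlow with hlt | heq
    · exfalso
      have hr0 : f %ₘ ψ ≠ 0 := by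
        intro h0
        rw [h0, (ht 0).mpr rfl] at hlt
        exact not_top_lt hlt
      refine hmin (f %ₘ ψ) hr0 (degree_modByMonic_lt f hψ) ⟨-(f /ₘ ψ), ?_⟩
      show ν (f %ₘ ψ) < ν (f %ₘ ψ - -(f /ₘ ψ) * ψ)
      rw [show f %ₘ ψ - -(f /ₘ ψ) * ψ = f %ₘ ψ + ψ * (f /ₘ ψ) by ring, hrq]
      exact hlt
    · exact heq.symm
  · have hf : ν f = ν (ψ * (f /ₘ ψ)) := by
      have h0 := s4_add_of_lt ν hu hneg h
      rwa [hrq] at h0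
    rw [hf, hqs]
    exact (min_eq_right (by rw [← hqs]; exact h.le)).symm

end S4Aux

/-- Properties of the augmented valuation `μ' = [μ; φ, γ]`. -/
theorem statement_4 {K : Type*} [Field K] {Λ : Type*} [AddCommGroup Λ] [LinearOrder Λ] [IsOrderedAddMonoid Λ]
    (v : K → WithTop Λ) (hv : IsVal v)
    (μ : K[X] → WithTop Λ) (hμ : IsValExt v μ)
    (φ : K[X]) (hφ : IsKeyPol μ φ)
    {Λ' : Type*} [AddCommGroup Λ'] [LinearOrder Λ'] [IsOrderedAddMonoid Λ'] (ι : Λ →+ Λ') (hι : StrictMono ι)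
    (γ : Λ') (hγ : WithTop.map ι (μ φ) < (γ : WithTop Λ'))
    (μ' : K[X] → WithTop Λ')
    (hμ' : ∀ (N : ℕ) (a : ℕ → K[X]), (∀ s, (a s).degree < φ.degree) →
        μ' (∑ s ∈ Finset.range N, a s * φ ^ s) =
          (Finset.range N).inf fun s => WithTop.map ι (μ (a s)) + s • (γ : WithTop Λ')) :
    IsValExt (fun c => WithTop.map ι (v c)) μ' ∧
    (∀ f : K[X], WithTop.map ι (μ f) ≤ μ' f) ∧
    (∀ f : K[X], f ≠ 0 → (WithTop.map ι (μ f) = μ' f ↔ ¬ MuDvd μ φ f)) ∧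
    IsKeyPol μ' φ ∧
    (∀ ψ : K[X], IsKeyPol μ' ψ → φ.degree ≤ ψ.degree) := by
  obtain ⟨hmul, hadd, htop, hCv⟩ := hμ
  obtain ⟨hmo, hmin, hne0, hnd1, hird⟩ := hφ
  have hφ0 : φ ≠ 0 := hne0
  have hμ1 : μ 1 = 0 := s4_val_one μ hmul htop
  have hμneg : ∀ f, μ (-f) = μ f := s4_val_neg μ hmul htop
  -- the degree of φ is positive
  have hdφ : 0 < φ.degree := by
    by_contra h
    push_neg at h
    have h0 : φ.natDegree = 0 := by
      have := degree_le_natDegree (p := φ)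
      rcases Nat.eq_zero_or_pos φ.natDegree with h1 | h1
      · exact h1
      · exact absurd (natDegree_pos_iff_degree_pos.mp h1) (not_lt.mpr h)
    have h1 : φ = 1 := eq_one_of_monic_natDegree_zero hmo h0
    refine hnd1 ⟨1, ?_⟩
    show μ 1 < μ (1 - 1 * φ)
    rw [h1, show (1 : K[X]) - 1 * 1 = 0 by ring, (htop 0).mpr rfl, hμ1]
    exact lt_top_iff_ne_top.mpr (by simp)
  have hdφn : 0 < φ.natDegree := natDegree_pos_iff_degree_pos.mpr hdφ
  -- facts about WithTop.map ι
  have hle : ∀ a b : WithTop Λ, WithTop.map (⇑ι) a ≤ WithTop.map (⇑ι) b ↔ a ≤ b :=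
    fun a b => WithTop.map_le_iff (⇑ι) (fun {x y} => hι.le_iff_le)
  have hmono : Monotone (WithTop.map (⇑ι)) := fun a b h => (hle a b).mpr h
  have hmlt : ∀ a b : WithTop Λ, WithTop.map (⇑ι) a < WithTop.map (⇑ι) b ↔ a < b := by
    intro a b
    rw [lt_iff_not_ge, lt_iff_not_ge, hle]
  have hmmin : ∀ a b : WithTop Λ,
      WithTop.map (⇑ι) (min a b) = min (WithTop.map (⇑ι) a) (WithTop.map (⇑ι) b) :=
    fun a b => hmono.map_min
  have hmadd : ∀ a b : WithTop Λ,
      WithTop.map (⇑ι) (a + b) = WithTop.map (⇑ι) a + WithTop.map (⇑ι) b :=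
    fun a b => WithTop.map_add ι a b
  have hmtop : ∀ a : WithTop Λ, WithTop.map (⇑ι) a = ⊤ ↔ a = ⊤ :=
    fun a => WithTop.map_eq_top_iff
  have hmzero : WithTop.map (⇑ι) (0 : WithTop Λ) = 0 := by
    rw [show ((0 : WithTop Λ)) = ((0 : Λ) : WithTop Λ) from rfl, WithTop.map_coe, map_zero]
    rfl
  have hγt : ((γ : WithTop Λ')) ≠ ⊤ := WithTop.coe_ne_top
  -- the expansion formula for μ'
  have MU : ∀ (f : K[X]) (N : ℕ), f.natDegree < N →
      μ' f = (Finset.range N).inf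
        (fun s => WithTop.map (⇑ι) (μ (s4coeff φ f s)) + s • (γ : WithTop Λ')) := by
    intro f N hN
    have h1 := hμ' N (s4coeff φ f) (fun s => s4coeff_degree hmo s f)
    rwa [s4coeff_sum hmo hdφ N f hN] at h1
  have Mtop0 : μ' 0 = ⊤ := by
    have h1 := hμ' 0 (fun _ => (0 : K[X]))
      (fun s => by rw [degree_zero]; exact lt_of_le_of_lt bot_le hdφ)
    simpa using h1
  -- the fundamental recursion for μ'
  have R : ∀ f : K[X], μ' f = min (WithTop.map (⇑ι) (μ (f %ₘ φ)))
      ((γ : WithTop Λ') + μ' (f /ₘ φ)) := by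
    intro f
    have hqN : (f /ₘ φ).natDegree < f.natDegree + 1 := by
      by_cases hq : f /ₘ φ = 0
      · rw [hq]; simp
      · have hf0 : f ≠ 0 := fun h => hq (by rw [h, zero_divByMonic])
        have := natDegree_lt_natDegree hq (degree_divByMonic_lt f φ hf0 hdφ)
        omega
    set b : ℕ → K[X] := fun s => match s with
      | 0 => f %ₘ φ
      | (t+1) => s4coeff φ (f /ₘ φ) t with hbdef
    have hbd : ∀ s, (b s).degree < φ.degree := by
      intro s
      match s with
      | 0 => exact degree_modByMonic_lt f hmo
      | (t+1) => exact s4coeff_degree hmo t _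
    have hbsum : ∑ s ∈ Finset.range (f.natDegree + 1 + 1), b s * φ ^ s = f := by
      rw [Finset.sum_range_succ']
      have h2 : ∑ s ∈ Finset.range (f.natDegree + 1), b (s+1) * φ ^ (s+1)
          = (∑ s ∈ Finset.range (f.natDegree + 1), s4coeff φ (f /ₘ φ) s * φ ^ s) * φ := by
        rw [Finset.sum_mul]
        refine Finset.sum_congr rfl (fun s _ => ?_)
        show s4coeff φ (f /ₘ φ) s * φ ^ (s+1) = s4coeff φ (f /ₘ φ) s * φ ^ s * φ
        rw [pow_succ, mul_assoc]
      rw [h2, s4coeff_sum hmo hdφ _ _ hqN]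
      show f /ₘ φ * φ + (f %ₘ φ) * φ ^ 0 = f
      rw [pow_zero, mul_one]
      linear_combination modByMonic_add_div f φ
    have h1 := hμ' (f.natDegree + 1 + 1) b hbd
    rw [hbsum] at h1
    have e1 : (Finset.range (f.natDegree + 1)).inf
        (fun s => WithTop.map (⇑ι) (μ (b (s+1))) + (s+1) • (γ : WithTop Λ'))
        = μ' (f /ₘ φ) + (γ : WithTop Λ') := by
      rw [MU (f /ₘ φ) (f.natDegree + 1) hqN, ← s4_inf_range_add_const]
      refine Finset.inf_congr rfl (fun s _ => ?_)
      show WithTop.map (⇑ι) (μ (s4coeff φ (f /ₘ φ) s)) + (s+1) • (γ : WithTop Λ')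
        = WithTop.map (⇑ι) (μ (s4coeff φ (f /ₘ φ) s)) + s • (γ : WithTop Λ') + (γ : WithTop Λ')
      rw [succ_nsmul, add_assoc]
    calc μ' f = (Finset.range (f.natDegree + 1 + 1)).inf
          (fun s => WithTop.map (⇑ι) (μ (b s)) + s • (γ : WithTop Λ')) := h1
      _ = (WithTop.map (⇑ι) (μ (b 0)) + 0 • (γ : WithTop Λ')) ⊓
          (Finset.range (f.natDegree + 1)).inf
            (fun s => WithTop.map (⇑ι) (μ (b (s+1))) + (s+1) • (γ : WithTop Λ')) :=
        s4_inf_range_succ _ _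
      _ = min (WithTop.map (⇑ι) (μ (f %ₘ φ))) ((γ : WithTop Λ') + μ' (f /ₘ φ)) := by
        rw [e1]
        show (WithTop.map (⇑ι) (μ (f %ₘ φ)) + 0 • (γ : WithTop Λ')) ⊓ (μ' (f /ₘ φ) + (γ : WithTop Λ'))
          = WithTop.map (⇑ι) (μ (f %ₘ φ)) ⊓ ((γ : WithTop Λ') + μ' (f /ₘ φ))
        rw [zero_nsmul, add_zero, add_comm (μ' (f /ₘ φ))]
  -- corollaries of R
  have Rdeglt : ∀ f : K[X], f.degree < φ.degree → μ' f = WithTop.map (⇑ι) (μ f) := by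
    intro f hdeg
    rw [R f, (modByMonic_eq_self_iff hmo).mpr hdeg, (divByMonic_eq_zero_iff hmo).mpr hdeg,
      Mtop0, add_top]
    exact min_eq_left le_top
  have Rmulφ : ∀ h : K[X], μ' (h * φ) = (γ : WithTop Λ') + μ' h := by
    intro h
    have hdm := div_modByMonic_unique (f := h * φ) h 0 hmo
      ⟨by ring, by rw [degree_zero]; exact lt_of_le_of_lt bot_le hdφ⟩
    rw [R (h * φ), hdm.1, hdm.2, (htop 0).mpr rfl, WithTop.map_top]
    exact min_eq_right le_top
  have Rle : ∀ f : K[X], μ' f ≤ WithTop.map (⇑ι) (μ (f %ₘ φ)) :=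
    fun f => (R f).trans_le (min_le_left _ _)
  -- μ' f = ⊤ iff f = 0
  have MtopIff : ∀ f : K[X], μ' f = ⊤ ↔ f = 0 := by
    have H : ∀ (n : ℕ) (f : K[X]), f.natDegree ≤ n → f ≠ 0 → μ' f ≠ ⊤ := by
      intro n
      induction n with
      | zero =>
        intro f hfn hf0
        have hdeg : f.degree < φ.degree := by
          refine lt_of_le_of_lt ?_ hdφ
          have h1 := degree_le_natDegree (p := f)
          rwa [Nat.le_zero.mp hfn, Nat.cast_zero] at h1
        rw [Rdeglt f hdeg]
        exact fun h => hf0 ((htop f).mp ((hmtop _).mp h))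
      | succ n ih =>
        intro f hfn hf0
        by_cases hdeg : f.degree < φ.degree
        · rw [Rdeglt f hdeg]
          exact fun h => hf0 ((htop f).mp ((hmtop _).mp h))
        · have hq0 : f /ₘ φ ≠ 0 := by
            rw [Ne, divByMonic_eq_zero_iff hmo]
            exact hdeg
          have hqn : (f /ₘ φ).natDegree ≤ n := by
            have := natDegree_lt_natDegree hq0 (degree_divByMonic_lt f φ hf0 hdφ)
            omega
          intro h
          rw [R f] at h
          have h2 := min_le_right (WithTop.map (⇑ι) (μ (f %ₘ φ))) ((γ : WithTop Λ') + μ' (f /ₘ φ))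
          rw [h] at h2
          rcases WithTop.add_eq_top.mp (top_le_iff.mp h2) with h3 | h3
          · exact hγt h3
          · exact ih _ hqn hq0 h3
    intro f
    constructor
    · intro h
      by_contra h0
      exact H f.natDegree f le_rfl h0 h
    · rintro rfl
      exact Mtop0
  -- μ' (-f) = μ' f
  have Mneg : ∀ f : K[X], μ' (-f) = μ' f := by
    intro f
    have h1 := hμ' (f.natDegree + 1) (fun s => -(s4coeff φ f s))
      (fun s => by rw [degree_neg]; exact s4coeff_degree hmo s f)
    have hs : ∑ s ∈ Finset.range (f.natDegree + 1), -(s4coeff φ f s) * φ ^ s = -f := by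
      simp only [neg_mul]
      rw [Finset.sum_neg_distrib, s4coeff_sum hmo hdφ _ f (by omega)]
    rw [hs] at h1
    rw [h1, MU f (f.natDegree + 1) (by omega)]
    exact Finset.inf_congr rfl (fun s _ => by rw [hμneg])
  -- ultrametric inequality for μ'
  have Multra : ∀ f g : K[X], min (μ' f) (μ' g) ≤ μ' (f + g) := by
    intro f g
    have hfN : f.natDegree < f.natDegree + g.natDegree + 1 := by omega
    have hgN : g.natDegree < f.natDegree + g.natDegree + 1 := by omega
    have h1 := hμ' (f.natDegree + g.natDegree + 1) (fun s => s4coeff φ f s + s4coeff φ g s)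
      (fun s => lt_of_le_of_lt (degree_add_le _ _)
        (max_lt (s4coeff_degree hmo s f) (s4coeff_degree hmo s g)))
    have hs : ∑ s ∈ Finset.range (f.natDegree + g.natDegree + 1),
        (s4coeff φ f s + s4coeff φ g s) * φ ^ s = f + g := by
      simp only [add_mul]
      rw [Finset.sum_add_distrib, s4coeff_sum hmo hdφ _ f hfN, s4coeff_sum hmo hdφ _ g hgN]
    rw [hs] at h1
    rw [h1]
    refine Finset.le_inf (fun s hs' => ?_)
    have hf' : μ' f ≤ WithTop.map (⇑ι) (μ (s4coeff φ f s)) + s • (γ : WithTop Λ') := by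
      rw [MU f _ hfN]
      exact Finset.inf_le hs'
    have hg' : μ' g ≤ WithTop.map (⇑ι) (μ (s4coeff φ g s)) + s • (γ : WithTop Λ') := by
      rw [MU g _ hgN]
      exact Finset.inf_le hs'
    calc min (μ' f) (μ' g)
        ≤ min (WithTop.map (⇑ι) (μ (s4coeff φ f s)) + s • (γ : WithTop Λ'))
            (WithTop.map (⇑ι) (μ (s4coeff φ g s)) + s • (γ : WithTop Λ')) := min_le_min hf' hg'
      _ = min (WithTop.map (⇑ι) (μ (s4coeff φ f s))) (WithTop.map (⇑ι) (μ (s4coeff φ g s)))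
            + s • (γ : WithTop Λ') := min_add_add_right _ _ _
      _ = WithTop.map (⇑ι) (min (μ (s4coeff φ f s)) (μ (s4coeff φ g s))) + s • (γ : WithTop Λ') := by
          rw [hmmin]
      _ ≤ WithTop.map (⇑ι) (μ (s4coeff φ f s + s4coeff φ g s)) + s • (γ : WithTop Λ') :=
          add_le_add_left ((hle _ _).mpr (hadd _ _)) _
  have Maddlt : ∀ {f g : K[X]}, μ' g < μ' f → μ' (f + g) = μ' g :=
    fun {f g} h => s4_add_of_lt μ' Multra Mneg h
  -- the expansion equality for μ
  have Eμ : ∀ f : K[X], μ f = min (μ (f %ₘ φ)) (μ (f /ₘ φ) + μ φ) :=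
    fun f => s4_E μ hmul hadd htop hmo hdφ hmin f
  -- μ ≤ μ'
  have Mle : ∀ f : K[X], WithTop.map (⇑ι) (μ f) ≤ μ' f := by
    have H : ∀ (n : ℕ) (f : K[X]), f.natDegree ≤ n → WithTop.map (⇑ι) (μ f) ≤ μ' f := by
      intro n
      induction n with
      | zero =>
        intro f hfn
        have hdeg : f.degree < φ.degree := by
          refine lt_of_le_of_lt ?_ hdφ
          have h1 := degree_le_natDegree (p := f)
          rwa [Nat.le_zero.mp hfn, Nat.cast_zero] at h1
        rw [Rdeglt f hdeg]
      | succ n ih =>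
        intro f hfn
        by_cases hdeg : f.degree < φ.degree
        · rw [Rdeglt f hdeg]
        · have hf0 : f ≠ 0 := by
            rintro rfl
            rw [degree_zero] at hdeg
            exact hdeg (lt_of_le_of_lt bot_le hdφ)
          have hq0 : f /ₘ φ ≠ 0 := by
            rw [Ne, divByMonic_eq_zero_iff hmo]
            exact hdeg
          have hqn : (f /ₘ φ).natDegree ≤ n := by
            have := natDegree_lt_natDegree hq0 (degree_divByMonic_lt f φ hf0 hdφ)
            omega
          rw [R f]
          refine le_min ((hle _ _).mpr ((Eμ f).trans_le (min_le_left _ _))) ?_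
          calc WithTop.map (⇑ι) (μ f)
              ≤ WithTop.map (⇑ι) (μ (f /ₘ φ) + μ φ) :=
                (hle _ _).mpr ((Eμ f).trans_le (min_le_right _ _))
            _ = WithTop.map (⇑ι) (μ (f /ₘ φ)) + WithTop.map (⇑ι) (μ φ) := hmadd _ _
            _ ≤ μ' (f /ₘ φ) + (γ : WithTop Λ') := add_le_add (ih _ hqn) hγ.le
            _ = (γ : WithTop Λ') + μ' (f /ₘ φ) := add_comm _ _
    exact fun f => H f.natDegree f le_rfl
  -- remainders do not change under adding multiples of φ
  have modadd : ∀ x y : K[X], (x + φ * y) %ₘ φ = x %ₘ φ := by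
    intro x y
    rw [add_modByMonic, (modByMonic_eq_zero_iff_dvd hmo).mpr (dvd_mul_right φ y), add_zero]
  -- characterization of μ'-divisibility by φ
  have L3 : ∀ f : K[X], MuDvd μ' φ f ↔ μ' f < WithTop.map (⇑ι) (μ (f %ₘ φ)) := by
    intro f
    constructor
    · rintro ⟨q, hq⟩
      have h2 : (f - q * φ) %ₘ φ = f %ₘ φ := by
        rw [show f - q * φ = f + φ * (-q) by ring, modadd]
      have h3 := Rle (f - q * φ)
      rw [h2] at h3
      exact lt_of_lt_of_le hq h3
    · intro h
      refine ⟨f /ₘ φ, ?_⟩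
      show μ' f < μ' (f - f /ₘ φ * φ)
      have h4 : f - f /ₘ φ * φ = f %ₘ φ := by
        have h0 := modByMonic_add_div f φ
        linear_combination -h0
      rw [h4, Rdeglt _ (degree_modByMonic_lt f hmo)]
      exact h
  -- characterization of μ-divisibility by φ
  have Lμ : ∀ f : K[X], MuDvd μ φ f ↔ μ f < μ (f %ₘ φ) := by
    intro f
    constructor
    · rintro ⟨q, hq⟩
      have h2 : (f - q * φ) %ₘ φ = f %ₘ φ := by
        rw [show f - q * φ = f + φ * (-q) by ring, modadd]
      have h3 : μ (f - q * φ) ≤ μ ((f - q * φ) %ₘ φ) := (Eμ _).trans_le (min_le_left _ _)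
      rw [h2] at h3
      exact lt_of_lt_of_le hq h3
    · intro h
      refine ⟨f /ₘ φ, ?_⟩
      show μ f < μ (f - f /ₘ φ * φ)
      have h4 : f - f /ₘ φ * φ = f %ₘ φ := by
        have h0 := modByMonic_add_div f φ
        linear_combination -h0
      rw [h4]
      exact h
  -- the remainder of a product of two nonzero low-degree polynomials keeps its value
  have Hab : ∀ a b : K[X], a ≠ 0 → b ≠ 0 → a.degree < φ.degree → b.degree < φ.degree →
      μ ((a * b) %ₘ φ) = μ (a * b) := by
    intro a b ha hb hda hdb
    have hnd : ¬ MuDvd μ φ (a * b) := by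
      intro h
      rcases hird a b h with h' | h'
      · exact hmin a ha hda h'
      · exact hmin b hb hdb h'
    rw [Lμ] at hnd
    push_neg at hnd
    exact le_antisymm hnd ((Eμ _).trans_le (min_le_left _ _))
  have hrled : ∀ p : K[X], (p %ₘ φ).natDegree ≤ p.natDegree := by
    intro p
    by_cases hp : p.degree < φ.degree
    · rw [(modByMonic_eq_self_iff hmo).mpr hp]
    · by_cases hp0 : p %ₘ φ = 0
      · rw [hp0, natDegree_zero]
        exact Nat.zero_le _
      · have h1 := natDegree_lt_natDegree hp0 (degree_modByMonic_lt p hmo)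
        have h2 : φ.natDegree ≤ p.natDegree := natDegree_le_natDegree (le_of_not_gt hp)
        omega
  -- multiplicativity of μ'
  have key : ∀ (n : ℕ) (f g : K[X]), f ≠ 0 → g ≠ 0 → f.natDegree + g.natDegree < n →
      μ' (f * g) = μ' f + μ' g := by
    intro n
    induction n with
    | zero => intro f g _ _ hn; exact absurd hn (Nat.not_lt_zero _)
    | succ n ih =>
    -- case B: the minimum for the first factor is attained strictly in the quotient branch
    have stepB : ∀ a b : K[X], a ≠ 0 → b ≠ 0 → a.natDegree + b.natDegree ≤ n →
        (γ : WithTop Λ') + μ' (a /ₘ φ) < WithTop.map (⇑ι) (μ (a %ₘ φ)) →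
        μ' (a * b) = μ' a + μ' b := by
      intro a b ha hb hab hB
      have hq0 : a /ₘ φ ≠ 0 := by
        intro h
        rw [h, Mtop0, add_top] at hB
        exact not_top_lt hB
      have hdφa : φ.degree ≤ a.degree :=
        le_of_not_gt (fun h => hq0 ((divByMonic_eq_zero_iff hmo).mpr h))
      have hqd : (a /ₘ φ).natDegree < a.natDegree :=
        natDegree_lt_natDegree hq0 (degree_divByMonic_lt a φ ha hdφ)
      have hμa : μ' a = (γ : WithTop Λ') + μ' (a /ₘ φ) := by
        rw [R a]
        exact min_eq_right hB.le
      have hIHq : μ' (a /ₘ φ * b) = μ' (a /ₘ φ) + μ' b := ih _ _ hq0 hb (by omega)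
      have hbtop : μ' b ≠ ⊤ := fun h => hb ((MtopIff b).mp h)
      have hqtop : μ' (a /ₘ φ) ≠ ⊤ := fun h => hq0 ((MtopIff _).mp h)
      have hG : μ' (a /ₘ φ * b * φ) = (γ : WithTop Λ') + (μ' (a /ₘ φ) + μ' b) := by
        rw [Rmulφ, hIHq]
      have hGne : μ' (a /ₘ φ * b * φ) ≠ ⊤ := by
        rw [hG]
        intro h
        rcases WithTop.add_eq_top.mp h with h | h
        · exact hγt h
        · rcases WithTop.add_eq_top.mp h with h | h
          · exact hqtop h
          · exact hbtop h
      have hsplit : a * b = (a %ₘ φ) * b + a /ₘ φ * b * φ := by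
        have h0 := modByMonic_add_div a φ
        linear_combination -b * h0
      have hlt : μ' (a /ₘ φ * b * φ) < μ' ((a %ₘ φ) * b) := by
        by_cases hr : a %ₘ φ = 0
        · rw [hr, zero_mul, Mtop0]
          exact lt_top_iff_ne_top.mpr hGne
        · have hrd : (a %ₘ φ).natDegree < a.natDegree :=
            natDegree_lt_natDegree hr (lt_of_lt_of_le (degree_modByMonic_lt a hmo) hdφa)
          have hIHr : μ' ((a %ₘ φ) * b) = μ' (a %ₘ φ) + μ' b := ih _ _ hr hb (by omega)
          rw [hIHr, hG, Rdeglt _ (degree_modByMonic_lt a hmo), ← add_assoc]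
          exact WithTop.add_lt_add_right hbtop hB
      calc μ' (a * b) = μ' ((a %ₘ φ) * b + a /ₘ φ * b * φ) := by rw [← hsplit]
        _ = μ' (a /ₘ φ * b * φ) := Maddlt hlt
        _ = (γ : WithTop Λ') + μ' (a /ₘ φ) + μ' b := by rw [hG, ← add_assoc]
        _ = μ' a + μ' b := by rw [hμa]
    intro f g hf hg hn
    by_cases hBf : WithTop.map (⇑ι) (μ (f %ₘ φ)) ≤ (γ : WithTop Λ') + μ' (f /ₘ φ)
    · by_cases hBg : WithTop.map (⇑ι) (μ (g %ₘ φ)) ≤ (γ : WithTop Λ') + μ' (g /ₘ φ)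
      · -- case A : both minima are attained at the remainder branch
        have hr0 : ∀ p : K[X], p ≠ 0 →
            WithTop.map (⇑ι) (μ (p %ₘ φ)) ≤ (γ : WithTop Λ') + μ' (p /ₘ φ) → p %ₘ φ ≠ 0 := by
          intro p hp hBp h0
          rw [h0, (htop 0).mpr rfl, WithTop.map_top] at hBp
          rcases WithTop.add_eq_top.mp (top_le_iff.mp hBp) with h | h
          · exact hγt h
          · apply hp
            have h1 : p /ₘ φ = 0 := (MtopIff _).mp h
            rw [← modByMonic_add_div p φ, h0, h1, mul_zero, add_zero]
        have hrf0 := hr0 f hf hBf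
        have hrg0 := hr0 g hg hBg
        have hμf : μ' f = WithTop.map (⇑ι) (μ (f %ₘ φ)) := by
          rw [R f]; exact min_eq_left hBf
        have hμg : μ' g = WithTop.map (⇑ι) (μ (g %ₘ φ)) := by
          rw [R g]; exact min_eq_left hBg
        have hrfd := degree_modByMonic_lt f hmo
        have hrgd := degree_modByMonic_lt g hmo
        have hcd : (f %ₘ φ) * (g %ₘ φ) %ₘ φ + φ * ((f %ₘ φ) * (g %ₘ φ) /ₘ φ)
            = (f %ₘ φ) * (g %ₘ φ) := modByMonic_add_div _ φ
        have hcv : μ ((f %ₘ φ) * (g %ₘ φ) %ₘ φ) = μ ((f %ₘ φ) * (g %ₘ φ)) :=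
          Hab _ _ hrf0 hrg0 hrfd hrgd
        have hsplit : f * g = (f %ₘ φ) * (g %ₘ φ) %ₘ φ +
            φ * ((f %ₘ φ) * (g %ₘ φ) /ₘ φ +
              ((f %ₘ φ) * (g /ₘ φ) + (f /ₘ φ) * (g %ₘ φ) + (f /ₘ φ) * (g /ₘ φ) * φ)) := by
          have h0 := modByMonic_add_div f φ
          have h1 := modByMonic_add_div g φ
          linear_combination (-g) * h0 - (f %ₘ φ + φ * (f /ₘ φ)) * h1 - hcd
        have hdm := div_modByMonic_unique (f := f * g)
          ((f %ₘ φ) * (g %ₘ φ) /ₘ φ +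
            ((f %ₘ φ) * (g /ₘ φ) + (f /ₘ φ) * (g %ₘ φ) + (f /ₘ φ) * (g /ₘ φ) * φ))
          ((f %ₘ φ) * (g %ₘ φ) %ₘ φ) hmo
          ⟨hsplit.symm, degree_modByMonic_lt _ hmo⟩
        have hb1 : WithTop.map (⇑ι) (μ ((f %ₘ φ) * (g %ₘ φ) %ₘ φ)) = μ' f + μ' g := by
          rw [hcv, hmul, hmadd, hμf, hμg]
        -- bounds for the four summands of the quotient branch
        have t1 : μ' f + μ' g ≤ (γ : WithTop Λ') + μ' ((f %ₘ φ) * (g %ₘ φ) /ₘ φ) := by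
          by_cases hd0 : (f %ₘ φ) * (g %ₘ φ) /ₘ φ = 0
          · rw [hd0, Mtop0, add_top]
            exact le_top
          · have hdd : ((f %ₘ φ) * (g %ₘ φ) /ₘ φ).degree < φ.degree := by
              have hφd : φ * ((f %ₘ φ) * (g %ₘ φ) /ₘ φ)
                  = (f %ₘ φ) * (g %ₘ φ) - (f %ₘ φ) * (g %ₘ φ) %ₘ φ := by
                linear_combination hcd
              have h6 : (φ * ((f %ₘ φ) * (g %ₘ φ) /ₘ φ)).natDegree
                  = φ.natDegree + ((f %ₘ φ) * (g %ₘ φ) /ₘ φ).natDegree :=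
                natDegree_mul hφ0 hd0
              have h2 : ((f %ₘ φ) * (g %ₘ φ) - (f %ₘ φ) * (g %ₘ φ) %ₘ φ).natDegree
                  ≤ (φ.natDegree - 1) + (φ.natDegree - 1) := by
                refine le_trans (natDegree_sub_le _ _) (max_le ?_ ?_)
                · rw [natDegree_mul hrf0 hrg0]
                  have h3 : (f %ₘ φ).natDegree < φ.natDegree := natDegree_lt_natDegree hrf0 hrfd
                  have h4 : (g %ₘ φ).natDegree < φ.natDegree := natDegree_lt_natDegree hrg0 hrgd
                  omega
                · by_cases hc0 : (f %ₘ φ) * (g %ₘ φ) %ₘ φ = 0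
                  · rw [hc0, natDegree_zero]
                    omega
                  · have := natDegree_lt_natDegree hc0 (degree_modByMonic_lt ((f %ₘ φ) * (g %ₘ φ)) hmo)
                    omega
              rw [hφd] at h6
              have h5 : ((f %ₘ φ) * (g %ₘ φ) /ₘ φ).natDegree < φ.natDegree := by omega
              exact degree_lt_degree h5
            rw [Rdeglt _ hdd]
            have h7 : μ ((f %ₘ φ) * (g %ₘ φ)) ≤ μ ((f %ₘ φ) * (g %ₘ φ) /ₘ φ) + μ φ :=
              (Eμ _).trans_le (min_le_right _ _)
            calc μ' f + μ' g = WithTop.map (⇑ι) (μ ((f %ₘ φ) * (g %ₘ φ))) := by rw [← hb1, hcv]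
              _ ≤ WithTop.map (⇑ι) (μ ((f %ₘ φ) * (g %ₘ φ) /ₘ φ)) + WithTop.map (⇑ι) (μ φ) := by
                  rw [← hmadd]; exact (hle _ _).mpr h7
              _ ≤ WithTop.map (⇑ι) (μ ((f %ₘ φ) * (g %ₘ φ) /ₘ φ)) + (γ : WithTop Λ') :=
                  add_le_add_right hγ.le _
              _ = (γ : WithTop Λ') + WithTop.map (⇑ι) (μ ((f %ₘ φ) * (g %ₘ φ) /ₘ φ)) := add_comm _ _
        have t2 : μ' f + μ' g ≤ (γ : WithTop Λ') + μ' ((f %ₘ φ) * (g /ₘ φ)) := by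
          by_cases hqg0 : g /ₘ φ = 0
          · rw [hqg0, mul_zero, Mtop0, add_top]
            exact le_top
          · have hqgd : (g /ₘ φ).natDegree < g.natDegree :=
              natDegree_lt_natDegree hqg0 (degree_divByMonic_lt g φ hg hdφ)
            have hIH2 : μ' ((f %ₘ φ) * (g /ₘ φ)) = μ' (f %ₘ φ) + μ' (g /ₘ φ) :=
              ih _ _ hrf0 hqg0 (by have := hrled f; omega)
            rw [hIH2, Rdeglt _ hrfd, ← hμf]
            calc μ' f + μ' g ≤ μ' f + ((γ : WithTop Λ') + μ' (g /ₘ φ)) :=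
                add_le_add_right ((R g).trans_le (min_le_right _ _)) _
              _ = (γ : WithTop Λ') + (μ' f + μ' (g /ₘ φ)) := add_left_comm _ _ _
        have t3 : μ' f + μ' g ≤ (γ : WithTop Λ') + μ' ((f /ₘ φ) * (g %ₘ φ)) := by
          by_cases hqf0 : f /ₘ φ = 0
          · rw [hqf0, zero_mul, Mtop0, add_top]
            exact le_top
          · have hqfd : (f /ₘ φ).natDegree < f.natDegree :=
              natDegree_lt_natDegree hqf0 (degree_divByMonic_lt f φ hf hdφ)
            have hIH3 : μ' ((f /ₘ φ) * (g %ₘ φ)) = μ' (f /ₘ φ) + μ' (g %ₘ φ) :=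
              ih _ _ hqf0 hrg0 (by have := hrled g; omega)
            rw [hIH3, Rdeglt _ hrgd, ← hμg]
            calc μ' f + μ' g ≤ ((γ : WithTop Λ') + μ' (f /ₘ φ)) + μ' g :=
                add_le_add_left ((R f).trans_le (min_le_right _ _)) _
              _ = (γ : WithTop Λ') + (μ' (f /ₘ φ) + μ' g) := add_assoc _ _ _
        have t4 : μ' f + μ' g ≤ (γ : WithTop Λ') + μ' ((f /ₘ φ) * (g /ₘ φ) * φ) := by
          by_cases hqf0 : f /ₘ φ = 0
          · rw [hqf0, zero_mul, zero_mul, Mtop0, add_top]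
            exact le_top
          by_cases hqg0 : g /ₘ φ = 0
          · rw [hqg0, mul_zero, zero_mul, Mtop0, add_top]
            exact le_top
          have hqfd : (f /ₘ φ).natDegree < f.natDegree :=
            natDegree_lt_natDegree hqf0 (degree_divByMonic_lt f φ hf hdφ)
          have hqgd : (g /ₘ φ).natDegree < g.natDegree :=
            natDegree_lt_natDegree hqg0 (degree_divByMonic_lt g φ hg hdφ)
          have hIH4 : μ' ((f /ₘ φ) * (g /ₘ φ)) = μ' (f /ₘ φ) + μ' (g /ₘ φ) :=
            ih _ _ hqf0 hqg0 (by omega)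
          rw [Rmulφ, hIH4]
          calc μ' f + μ' g
              ≤ ((γ : WithTop Λ') + μ' (f /ₘ φ)) + ((γ : WithTop Λ') + μ' (g /ₘ φ)) :=
                add_le_add ((R f).trans_le (min_le_right _ _)) ((R g).trans_le (min_le_right _ _))
            _ = (γ : WithTop Λ') + ((γ : WithTop Λ') + (μ' (f /ₘ φ) + μ' (g /ₘ φ))) := by abel
        have hmin3 : μ' f + μ' g ≤ (γ : WithTop Λ') +
            min (μ' ((f %ₘ φ) * (g %ₘ φ) /ₘ φ))
              (min (min (μ' ((f %ₘ φ) * (g /ₘ φ))) (μ' ((f /ₘ φ) * (g %ₘ φ))))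
                (μ' ((f /ₘ φ) * (g /ₘ φ) * φ))) := by
          rw [← min_add_add_left, ← min_add_add_left, ← min_add_add_left]
          exact le_min t1 (le_min (le_min t2 t3) t4)
        have hfull : min (μ' ((f %ₘ φ) * (g %ₘ φ) /ₘ φ))
              (min (min (μ' ((f %ₘ φ) * (g /ₘ φ))) (μ' ((f /ₘ φ) * (g %ₘ φ))))
                (μ' ((f /ₘ φ) * (g /ₘ φ) * φ)))
            ≤ μ' ((f %ₘ φ) * (g %ₘ φ) /ₘ φ +
              ((f %ₘ φ) * (g /ₘ φ) + (f /ₘ φ) * (g %ₘ φ) + (f /ₘ φ) * (g /ₘ φ) * φ)) := by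
          have s1 : min (μ' ((f %ₘ φ) * (g /ₘ φ))) (μ' ((f /ₘ φ) * (g %ₘ φ)))
              ≤ μ' ((f %ₘ φ) * (g /ₘ φ) + (f /ₘ φ) * (g %ₘ φ)) := Multra _ _
          have s2 : min (min (μ' ((f %ₘ φ) * (g /ₘ φ))) (μ' ((f /ₘ φ) * (g %ₘ φ))))
              (μ' ((f /ₘ φ) * (g /ₘ φ) * φ))
              ≤ μ' ((f %ₘ φ) * (g /ₘ φ) + (f /ₘ φ) * (g %ₘ φ) + (f /ₘ φ) * (g /ₘ φ) * φ) :=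
            le_trans (min_le_min s1 le_rfl) (Multra _ _)
          exact le_trans (min_le_min le_rfl s2) (Multra _ _)
        have hb2 : μ' f + μ' g ≤ (γ : WithTop Λ') + μ' ((f %ₘ φ) * (g %ₘ φ) /ₘ φ +
            ((f %ₘ φ) * (g /ₘ φ) + (f /ₘ φ) * (g %ₘ φ) + (f /ₘ φ) * (g /ₘ φ) * φ)) :=
          le_trans hmin3 (add_le_add_right hfull _)
        rw [R (f * g), hdm.1, hdm.2, hb1]
        exact min_eq_left hb2
      · rw [mul_comm, add_comm]
        exact stepB g f hg hf (by omega) (not_le.mp hBg)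
    · exact stepB f g hf hg (by omega) (not_le.mp hBf)
  have Mmult : ∀ f g : K[X], μ' (f * g) = μ' f + μ' g := by
    intro f g
    rcases eq_or_ne f 0 with rfl | hf
    · rw [zero_mul, Mtop0, top_add]
    rcases eq_or_ne g 0 with rfl | hg
    · rw [mul_zero, Mtop0, add_top]
    exact key (f.natDegree + g.natDegree + 1) f g hf hg (by omega)
  -- values of 1 and φ
  have hμ'1 : μ' 1 = 0 := by
    rw [Rdeglt 1 (by rw [degree_one]; exact hdφ), hμ1, hmzero]
  have hμ'φ : μ' φ = (γ : WithTop Λ') := by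
    have h0 := Rmulφ 1
    rwa [one_mul, hμ'1, add_zero] at h0
  -- φ is μ'-minimal
  have hmin' : MuMinimal μ' φ := by
    intro g hg0 hgd hdvd
    have h1 := (L3 g).mp hdvd
    rw [(modByMonic_eq_self_iff hmo).mpr hgd, ← Rdeglt g hgd] at h1
    exact lt_irrefl _ h1
  -- φ is μ'-irreducible
  have hird' : MuIrred μ' φ := by
    refine ⟨hφ0, hmin' 1 one_ne_zero (by rw [degree_one]; exact hdφ), ?_⟩
    intro a b hab
    by_contra hcon
    push_neg at hcon
    obtain ⟨hna, hnb⟩ := hcon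
    have ha0 : a ≠ 0 := by
      rintro rfl
      rw [zero_mul] at hab
      obtain ⟨q, hq⟩ := hab
      have hq2 : μ' 0 < μ' (0 - q * φ) := hq
      rw [Mtop0] at hq2
      exact not_top_lt hq2
    have hb0 : b ≠ 0 := by
      rintro rfl
      rw [mul_zero] at hab
      obtain ⟨q, hq⟩ := hab
      have hq2 : μ' 0 < μ' (0 - q * φ) := hq
      rw [Mtop0] at hq2
      exact not_top_lt hq2
    have hea : μ' a = WithTop.map (⇑ι) (μ (a %ₘ φ)) :=
      le_antisymm (Rle a) (not_lt.mp (fun h => hna ((L3 a).mpr h)))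
    have heb : μ' b = WithTop.map (⇑ι) (μ (b %ₘ φ)) :=
      le_antisymm (Rle b) (not_lt.mp (fun h => hnb ((L3 b).mpr h)))
    have hra0 : a %ₘ φ ≠ 0 := by
      intro h
      rw [h, (htop 0).mpr rfl, WithTop.map_top] at hea
      exact ha0 ((MtopIff a).mp hea)
    have hrb0 : b %ₘ φ ≠ 0 := by
      intro h
      rw [h, (htop 0).mpr rfl, WithTop.map_top] at heb
      exact hb0 ((MtopIff b).mp heb)
    have hsplit : (a * b) %ₘ φ = ((a %ₘ φ) * (b %ₘ φ)) %ₘ φ := by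
      have he : a * b = (a %ₘ φ) * (b %ₘ φ) +
          φ * ((a %ₘ φ) * (b /ₘ φ) + (a /ₘ φ) * (b %ₘ φ) + φ * ((a /ₘ φ) * (b /ₘ φ))) := by
        have h0 := modByMonic_add_div a φ
        have h1 := modByMonic_add_div b φ
        linear_combination (-b) * h0 - (a %ₘ φ + φ * (a /ₘ φ)) * h1
      rw [he, modadd]
    have hval : WithTop.map (⇑ι) (μ ((a * b) %ₘ φ)) = μ' (a * b) := by
      rw [hsplit, Hab _ _ hra0 hrb0 (degree_modByMonic_lt a hmo) (degree_modByMonic_lt b hmo),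
        hmul, hmadd, Mmult, hea, heb]
    have h2 := (L3 (a * b)).mp hab
    rw [hval] at h2
    exact lt_irrefl _ h2
  -- the equality criterion
  have part3 : ∀ f : K[X], f ≠ 0 → (WithTop.map (⇑ι) (μ f) = μ' f ↔ ¬ MuDvd μ φ f) := by
    intro f hf0
    constructor
    · intro heq hdvd
      rw [Lμ] at hdvd
      have hbr1 : WithTop.map (⇑ι) (μ f) < WithTop.map (⇑ι) (μ (f %ₘ φ)) := (hmlt _ _).mpr hdvd
      have hbr2 : WithTop.map (⇑ι) (μ f) < (γ : WithTop Λ') + μ' (f /ₘ φ) := by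
        by_cases hq : f /ₘ φ = 0
        · rw [hq, Mtop0, add_top]
          exact lt_top_iff_ne_top.mpr (fun h => hf0 ((htop f).mp ((hmtop _).mp h)))
        · have h1 : μ f ≤ μ (f /ₘ φ) + μ φ := (Eμ f).trans_le (min_le_right _ _)
          have h2 : WithTop.map (⇑ι) (μ (f /ₘ φ)) ≠ ⊤ :=
            fun h => hq ((htop _).mp ((hmtop _).mp h))
          calc WithTop.map (⇑ι) (μ f)
              ≤ WithTop.map (⇑ι) (μ (f /ₘ φ)) + WithTop.map (⇑ι) (μ φ) := by
                rw [← hmadd]; exact (hle _ _).mpr h1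
            _ < WithTop.map (⇑ι) (μ (f /ₘ φ)) + (γ : WithTop Λ') := WithTop.add_lt_add_left h2 hγ
            _ ≤ μ' (f /ₘ φ) + (γ : WithTop Λ') := add_le_add_left (Mle _) _
            _ = (γ : WithTop Λ') + μ' (f /ₘ φ) := add_comm _ _
      have h3 : WithTop.map (⇑ι) (μ f) < μ' f := by
        rw [R f]
        exact lt_min hbr1 hbr2
      rw [heq] at h3
      exact lt_irrefl _ h3
    · intro hnd
      have h1 : μ f = μ (f %ₘ φ) := by
        have hle1 : μ f ≤ μ (f %ₘ φ) := (Eμ f).trans_le (min_le_left _ _)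
        rcases lt_or_eq_of_le hle1 with h | h
        · exact absurd ((Lμ f).mpr h) hnd
        · exact h
      rw [R f, ← h1]
      refine (min_eq_left ?_).symm
      calc WithTop.map (⇑ι) (μ f)
          ≤ WithTop.map (⇑ι) (μ (f /ₘ φ)) + WithTop.map (⇑ι) (μ φ) := by
            rw [← hmadd]; exact (hle _ _).mpr ((Eμ f).trans_le (min_le_right _ _))
        _ ≤ μ' (f /ₘ φ) + (γ : WithTop Λ') := add_le_add (Mle _) hγ.le
        _ = (γ : WithTop Λ') + μ' (f /ₘ φ) := add_comm _ _
  -- every key polynomial of μ' has degree at least deg φ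
  have part5 : ∀ ψ : K[X], IsKeyPol μ' ψ → φ.degree ≤ ψ.degree := by
    intro ψ hψ
    obtain ⟨hψm, hψmin, hψ0, hψnd1, _⟩ := hψ
    by_contra hlt
    push_neg at hlt
    have hψd : 0 < ψ.degree := by
      rcases Nat.eq_zero_or_pos ψ.natDegree with h | h
      · exfalso
        have h1 : ψ = 1 := eq_one_of_monic_natDegree_zero hψm h
        refine hψnd1 ⟨1, ?_⟩
        show μ' 1 < μ' (1 - 1 * ψ)
        rw [h1, show (1 : K[X]) - 1 * 1 = 0 by ring, Mtop0, hμ'1]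
        exact lt_top_iff_ne_top.mpr (by simp)
      · exact natDegree_pos_iff_degree_pos.mp h
    have hE' := s4_E μ' Mmult Multra MtopIff hψm hψd hψmin φ
    have h1 : (φ %ₘ ψ).degree < φ.degree := lt_trans (degree_modByMonic_lt φ hψm) hlt
    have h2 : (φ /ₘ ψ).degree < φ.degree := degree_divByMonic_lt φ ψ hφ0 hψd
    rw [hμ'φ, Rdeglt _ h1, Rdeglt _ h2, Rdeglt _ hlt, ← hmadd, ← hmmin] at hE'
    have h4 : min (μ (φ %ₘ ψ)) (μ (φ /ₘ ψ) + μ ψ) ≤ μ φ := by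
      have h5 := hadd (φ %ₘ ψ) (ψ * (φ /ₘ ψ))
      rw [modByMonic_add_div φ ψ, hmul, add_comm (μ ψ)] at h5
      exact h5
    have h6 : (γ : WithTop Λ') ≤ WithTop.map (⇑ι) (μ φ) := hE'.trans_le ((hle _ _).mpr h4)
    exact absurd hγ (not_lt.mpr h6)
  refine ⟨⟨Mmult, Multra, MtopIff, fun c => ?_⟩, Mle, part3, ⟨hmo, hmin', hird'⟩, part5⟩
  rw [Rdeglt _ (lt_of_le_of_lt degree_C_le hdφ), hCv]
end

section
/- Let (K,v) be a valued field, let μ be a valuation on K[x] extending v and μ* a semivaluation on K[x] extending v, both with values in a common linearly ordered abelian group Λ (plus ∞). Suppose μ ≤ μ* and μ ≠ μ*, and let φ ∈ K[x] be a monic polynomial of minimal degree among monic polynomials satisfying μ(φ) < μ*(φ). Then: (a) φ is a key polynomial for μ; (b) the augmented valuation μ' defined on canonical φ-expansions by μ'(Σ_{s≥0} a_s φ^s) = min_s (μ(a_s) + s·μ*(φ)) satisfies μ < μ' ≤ μ*; (c) for every f ∈ K[x], μ(f) = μ*(f) if and only if φ ∤_μ f. -/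
open Polynomial

section AuxLemmas

variable {Λ : Type*} [AddCommGroup Λ] [LinearOrder Λ] [IsOrderedAddMonoid Λ]

private lemma aux_idem (a : WithTop Λ) (ht : a ≠ ⊤) (h : a + a = a) : a = 0 := by
  lift a to Λ using ht
  norm_cast at h ⊢
  exact add_eq_right.mp h

private lemma aux_dbl (a : WithTop Λ) (h : a + a = 0) : a = 0 := by
  induction a with
  | top => simp at h
  | coe a =>
    norm_cast at h ⊢
    rcases lt_trichotomy a 0 with h1 | h1 | h1
    · have := add_lt_add h1 h1; simp only [add_zero] at this; exact absurd h this.ne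
    · exact h1
    · have := add_lt_add h1 h1; simp only [add_zero] at this; exact absurd h this.ne'

private lemma aux_inf_succ {α : Type*} [LinearOrder α] [OrderTop α] (N : ℕ) (F : ℕ → α) :
    (Finset.range (N + 1)).inf F = min (F 0) ((Finset.range N).inf fun s => F (s + 1)) := by
  apply le_antisymm
  · refine le_min (Finset.inf_le (by simp)) (Finset.le_inf fun s hs => Finset.inf_le ?_)
    simp only [Finset.mem_range] at hs ⊢; omega
  · refine Finset.le_inf fun s hs => ?_
    match s with
    | 0 => exact min_le_left _ _
    | s + 1 =>
      refine le_trans (min_le_right _ _) (Finset.inf_le ?_)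
      simp only [Finset.mem_range] at hs ⊢; omega

private lemma aux_add_inf (c : WithTop Λ) (N : ℕ) (F : ℕ → WithTop Λ) :
    c + (Finset.range N).inf F = (Finset.range N).inf fun s => c + F s := by
  rcases Nat.eq_zero_or_pos N with rfl | hN
  · simp
  · apply le_antisymm
    · exact Finset.le_inf fun s hs => add_le_add_right (Finset.inf_le hs) c
    · obtain ⟨b, hb, he⟩ := Finset.exists_mem_eq_inf (Finset.range N)
        (Finset.nonempty_range_iff.mpr hN.ne') F
      rw [he]
      exact Finset.inf_le hb

private lemma aux_min_add {R : Type*} [Ring R] (w : R → WithTop Λ)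
    (hadd : ∀ f g : R, min (w f) (w g) ≤ w (f + g)) (hneg : ∀ f : R, w (-f) = w f)
    {f g : R} (h : w f ≠ w g) : w (f + g) = min (w f) (w g) := by
  have key : ∀ f g : R, w f < w g → w (f + g) = w f := by
    intro f g hfg
    refine le_antisymm ?_ (le_trans (le_min le_rfl hfg.le) (hadd f g))
    by_contra hgt
    push_neg at hgt
    have e : f + g + -g = f := add_neg_cancel_right f g
    have h2 := hadd (f + g) (-g)
    rw [e, hneg] at h2
    exact absurd h2 (not_le.mpr (lt_min hgt hfg))
  rcases h.lt_or_gt with hfg | hfg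
  · rw [key f g hfg, min_eq_left hfg.le]
  · rw [add_comm, key g f hfg, min_eq_right hfg.le]

private lemma aux_pow {R : Type*} [CommRing R] (w : R → WithTop Λ)
    (hmul : ∀ f g : R, w (f * g) = w f + w g) (hone : w 1 = 0) (f : R) :
    ∀ s : ℕ, w (f ^ s) = s • w f := by
  intro s
  induction s with
  | zero => simpa using hone
  | succ s ih => rw [pow_succ, hmul, ih, succ_nsmul]

private lemma aux_inf_sum {R : Type*} [CommRing R] (w : R → WithTop Λ)
    (hadd : ∀ f g : R, min (w f) (w g) ≤ w (f + g)) (hzero : w 0 = ⊤)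
    (g : ℕ → R) : ∀ N : ℕ,
      (Finset.range N).inf (fun s => w (g s)) ≤ w (∑ s ∈ Finset.range N, g s) := by
  intro N
  induction N with
  | zero => simp [hzero]
  | succ N ih =>
    rw [Finset.sum_range_succ, Finset.range_add_one, Finset.inf_insert]
    calc w (g N) ⊓ (Finset.range N).inf (fun s => w (g s))
        ≤ w (g N) ⊓ w (∑ s ∈ Finset.range N, g s) := inf_le_inf_left _ ih
      _ ≤ w (∑ s ∈ Finset.range N, g s + g N) := by rw [inf_comm]; exact hadd _ _
      _ = _ := rfl

end AuxLemmas


/-- If `μ < μ*` and `φ` is monic of minimal degree with `μ φ < μ* φ`,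
then `φ` is a key polynomial for `μ`, the augmentation `μ' = [μ; φ, μ*(φ)]` satisfies
`μ < μ' ≤ μ*`, and `μ f = μ* f` iff `φ ∤_μ f`. -/
theorem statement_6 {K : Type*} [Field K] {Λ : Type*} [AddCommGroup Λ] [LinearOrder Λ] [IsOrderedAddMonoid Λ]
    (v : K → WithTop Λ) (hv : IsVal v)
    (μ : K[X] → WithTop Λ) (hμ : IsValExt v μ)
    (μs : K[X] → WithTop Λ) (hμs : IsSemivalExt v μs)
    (hle : ∀ f : K[X], μ f ≤ μs f) (hne : μ ≠ μs)
    (φ : K[X]) (hmon : φ.Monic) (hlt : μ φ < μs φ)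
    (hmindeg : ∀ ψ : K[X], ψ.Monic → μ ψ < μs ψ → φ.degree ≤ ψ.degree)
    (μ' : K[X] → WithTop Λ)
    (hμ' : ∀ (N : ℕ) (a : ℕ → K[X]), (∀ s, (a s).degree < φ.degree) →
        μ' (∑ s ∈ Finset.range N, a s * φ ^ s) =
          (Finset.range N).inf fun s => μ (a s) + s • μs φ) :
    IsKeyPol μ φ ∧
    (∀ f : K[X], μ f ≤ μ' f) ∧ μ ≠ μ' ∧ (∀ f : K[X], μ' f ≤ μs f) ∧
    (∀ f : K[X], μ f = μs f ↔ ¬ MuDvd μ φ f) := by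
  obtain ⟨hvm, hva, hvt⟩ := hv
  obtain ⟨hμm, hμa, hμt, hμc⟩ := hμ
  obtain ⟨hsm, hsa, hs0, hsc⟩ := hμs
  -- basic facts
  have hμzero : μ 0 = ⊤ := (hμt 0).2 rfl
  have hμnetop : ∀ f : K[X], f ≠ 0 → μ f ≠ ⊤ := fun f hf h => hf ((hμt f).1 h)
  have hv1 : v 1 = 0 := by
    refine aux_idem _ (fun h => one_ne_zero ((hvt 1).1 h)) ?_
    rw [← hvm]; norm_num
  have hμ1 : μ 1 = 0 := by rw [← Polynomial.C_1, hμc, hv1]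
  have hs1 : μs 1 = 0 := by rw [← Polynomial.C_1, hsc, hv1]
  have hvneg1 : v (-1) = 0 := by
    refine aux_dbl _ ?_
    rw [← hvm]; norm_num [hv1]
  have hμneg : ∀ f : K[X], μ (-f) = μ f := by
    intro f
    have e : -f = Polynomial.C (-1) * f := by
      rw [map_neg, Polynomial.C_1, neg_one_mul]
    rw [e, hμm, hμc, hvneg1, zero_add]
  have hsneg : ∀ f : K[X], μs (-f) = μs f := by
    intro f
    have e : -f = Polynomial.C (-1) * f := by
      rw [map_neg, Polynomial.C_1, neg_one_mul]
    rw [e, hsm, hsc, hvneg1, zero_add]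
  have hμmin : ∀ f g : K[X], μ f ≠ μ g → μ (f + g) = min (μ f) (μ g) :=
    fun f g h => aux_min_add μ hμa hμneg h
  have hsmin : ∀ f g : K[X], μs f ≠ μs g → μs (f + g) = min (μs f) (μs g) :=
    fun f g h => aux_min_add μs hsa hsneg h
  -- degree of φ
  have hφ0 : φ ≠ 0 := hmon.ne_zero
  have hφnd : φ.natDegree ≠ 0 := by
    intro h
    have : φ = 1 := hmon.natDegree_eq_zero.mp h
    rw [this, hμ1, hs1] at hlt
    exact lt_irrefl _ hlt
  have hφdpos : 0 < φ.degree :=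
    Polynomial.natDegree_pos_iff_degree_pos.mp (Nat.pos_of_ne_zero hφnd)
  have hφbot : (⊥ : WithBot ℕ) < φ.degree :=
    lt_of_le_of_lt bot_le hφdpos
  -- small degree polynomials have equal values
  have hsmall : ∀ a : K[X], a.degree < φ.degree → μs a = μ a := by
    intro a hdeg
    rcases eq_or_ne a 0 with rfl | h0
    · rw [hs0, hμzero]
    by_contra hne'
    have hlt' : μ a < μs a := lt_of_le_of_ne (hle a) (Ne.symm hne')
    have hc0 : (a.leadingCoeff)⁻¹ ≠ 0 :=
      inv_ne_zero (Polynomial.leadingCoeff_ne_zero.mpr h0)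
    have hvc : v (a.leadingCoeff)⁻¹ ≠ ⊤ := fun h => hc0 ((hvt _).1 h)
    have hψ : (a * Polynomial.C (a.leadingCoeff)⁻¹).Monic :=
      Polynomial.monic_mul_leadingCoeff_inv h0
    have hψlt : μ (a * Polynomial.C (a.leadingCoeff)⁻¹) <
        μs (a * Polynomial.C (a.leadingCoeff)⁻¹) := by
      rw [hμm, hsm, hμc, hsc]
      exact WithTop.add_lt_add_right hvc hlt'
    have := hmindeg _ hψ hψlt
    rw [Polynomial.degree_mul_leadingCoeff_inv a h0] at this
    exact absurd hdeg (not_lt.mpr this)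
  -- from f ∼_μ qφ we get μ (qφ) = μ f
  have hμeq_of : ∀ f q : K[X], μ f < μ (f - q * φ) → μ (q * φ) = μ f := by
    intro f q h
    have e : f + -(f - q * φ) = q * φ := by ring
    have hne2 : μ f ≠ μ (-(f - q * φ)) := by rw [hμneg]; exact h.ne
    rw [← e, hμmin f _ hne2, hμneg, min_eq_left h.le]
  -- μ-minimality of φ
  have hminimal : MuMinimal μ φ := by
    rintro g hg0 hgd ⟨q, hq⟩
    have hq' : μ g < μ (g - q * φ) := hq
    have hq0 : q ≠ 0 := by rintro rfl; simp at hq'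
    have hgval : μ (q * φ) = μ g := hμeq_of g q hq'
    have hsg : μs g = μ g := hsmall g hgd
    have h1 : μ g < μs (g - q * φ) := lt_of_lt_of_le hq' (hle _)
    have h2 : μ g < μs (q * φ) := by
      rw [hsm, ← hgval, hμm]
      exact lt_of_lt_of_le (WithTop.add_lt_add_left (hμnetop q hq0) hlt)
        (add_le_add_left (hle q) _)
    have h3 := hsa (g - q * φ) (q * φ)
    rw [sub_add_cancel] at h3
    rw [hsg] at h3
    exact absurd (lt_of_lt_of_le (lt_min h1 h2) h3) (lt_irrefl _)
  -- one-step expansion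
  have hstep : ∀ q r : K[X], r.degree < φ.degree →
      μ (φ * q + r) = min (μ φ + μ q) (μ r) := by
    intro q r hr
    rcases eq_or_ne (μ (φ * q)) (μ r) with he | hne'
    · have hub : μ (φ * q + r) ≤ μ r := by
        by_contra hgt
        push_neg at hgt
        have hr0 : r ≠ 0 := by
          rintro rfl
          rw [hμzero] at hgt
          exact absurd hgt not_top_lt
        refine hminimal r hr0 hr ⟨-q, ?_⟩
        show μ r < μ (r - -q * φ)
        have e : r - -q * φ = φ * q + r := by ring
        rw [e]; exact hgt
      have hlb := hμa (φ * q) r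
      rw [he, min_self] at hlb
      rw [hμm] at he
      rw [he, min_self]
      exact le_antisymm hub hlb
    · rw [hμmin _ _ hne', hμm]
  -- splitting of expansions
  have hsplit : ∀ (N : ℕ) (a : ℕ → K[X]),
      ∑ s ∈ Finset.range (N + 1), a s * φ ^ s =
        φ * (∑ s ∈ Finset.range N, a (s + 1) * φ ^ s) + a 0 := by
    intro N a
    rw [Finset.sum_range_succ', Finset.mul_sum, pow_zero, mul_one]
    congr 1
    exact Finset.sum_congr rfl fun s _ => by ring
  -- μ of expansions
  have hExp : ∀ (N : ℕ) (a : ℕ → K[X]), (∀ s, (a s).degree < φ.degree) →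
      μ (∑ s ∈ Finset.range N, a s * φ ^ s) =
        (Finset.range N).inf fun s => μ (a s) + s • μ φ := by
    intro N
    induction N with
    | zero => intro a _; simp [hμzero]
    | succ N ih =>
      intro a ha
      rw [hsplit N a, hstep _ _ (ha 0), ih (fun s => a (s + 1)) (fun s => ha (s + 1)),
        aux_add_inf, aux_inf_succ]
      rw [min_comm]
      congr 1
      · rw [zero_nsmul, add_zero]
      · refine Finset.inf_congr rfl fun s _ => ?_
        rw [succ_nsmul]; abel
  -- existence of expansions
  have hexistsAux : ∀ (n : ℕ) (f : K[X]), f.natDegree ≤ n →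
      ∃ (N : ℕ) (a : ℕ → K[X]), (∀ s, (a s).degree < φ.degree) ∧
        f = ∑ s ∈ Finset.range N, a s * φ ^ s := by
    intro n
    induction n with
    | zero =>
      intro f hf
      refine ⟨1, fun _ => f, fun s => ?_, by simp⟩
      calc f.degree ≤ (f.natDegree : WithBot ℕ) := Polynomial.degree_le_natDegree
        _ ≤ (0 : ℕ) := by exact_mod_cast Nat.cast_le.mpr hf
        _ < φ.degree := hφdpos
    | succ n ih =>
      intro f hf
      by_cases hd : f.degree < φ.degree
      · exact ⟨1, fun _ => f, fun _ => hd, by simp⟩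
      · have hq : (f /ₘ φ).natDegree ≤ n := by
          rw [Polynomial.natDegree_divByMonic f hmon]
          have h1 : 1 ≤ φ.natDegree := Nat.one_le_iff_ne_zero.mpr hφnd
          omega
        obtain ⟨M, b, hb, hqe⟩ := ih (f /ₘ φ) hq
        refine ⟨M + 1, fun s => Nat.rec (f %ₘ φ) (fun s _ => b s) s, fun s => ?_, ?_⟩
        · match s with
          | 0 => exact Polynomial.degree_modByMonic_lt f hmon
          | s + 1 => exact hb s
        · rw [hsplit M]
          show f = φ * (∑ s ∈ Finset.range M, b s * φ ^ s) + f %ₘ φ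
          rw [← hqe, add_comm, Polynomial.modByMonic_add_div f φ]
  have hexp : ∀ f : K[X], ∃ (N : ℕ) (a : ℕ → K[X]), (∀ s, (a s).degree < φ.degree) ∧
      f = ∑ s ∈ Finset.range N, a s * φ ^ s := fun f => hexistsAux f.natDegree f le_rfl
  -- μ ≤ μ'
  have hlemu' : ∀ f : K[X], μ f ≤ μ' f := by
    intro f
    obtain ⟨N, a, ha, rfl⟩ := hexp f
    rw [hExp N a ha, hμ' N a ha]
    exact Finset.le_inf fun s hs =>
      le_trans (Finset.inf_le hs) (add_le_add_right (nsmul_le_nsmul_right hlt.le s) _)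
  -- μ' ≤ μs
  have hμ'le : ∀ f : K[X], μ' f ≤ μs f := by
    intro f
    obtain ⟨N, a, ha, rfl⟩ := hexp f
    rw [hμ' N a ha]
    refine le_trans (le_of_eq ?_) (aux_inf_sum μs hsa hs0 (fun s => a s * φ ^ s) N)
    refine Finset.inf_congr rfl fun s _ => ?_
    rw [hsm, hsmall _ (ha s), aux_pow μs hsm hs1 φ s]
  -- μ ≠ μ'
  have hμ'phi : μ' φ = μs φ := by
    have ha : ∀ s, ((fun s => if s = 1 then (1 : K[X]) else 0) s).degree < φ.degree := by
      intro s
      by_cases h : s = 1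
      · simpa [h, Polynomial.degree_one] using hφdpos
      · simpa [h, Polynomial.degree_zero] using hφbot
    have he : (∑ s ∈ Finset.range 2, (if s = 1 then (1 : K[X]) else 0) * φ ^ s) = φ := by
      rw [Finset.sum_range_succ, Finset.sum_range_one]
      simp
    have h2 := hμ' 2 _ ha
    rw [he] at h2
    rw [h2, aux_inf_succ, aux_inf_succ]
    simp [hμzero, hμ1]
  have hnemu' : μ ≠ μ' := by
    intro h
    have := hμ'phi
    rw [← congrFun h φ] at this
    exact hlt.ne this
  -- MuDvd implies strict increase
  have hdvd_lt : ∀ f : K[X], MuDvd μ φ f → μ f < μs f := by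
    rintro f ⟨q, hq⟩
    have hq' : μ f < μ (f - q * φ) := hq
    have hq0 : q ≠ 0 := by rintro rfl; simp at hq'
    have hfq : μ (q * φ) = μ f := hμeq_of f q hq'
    have h1 : μ f < μs (f - q * φ) := lt_of_lt_of_le hq' (hle _)
    have h2 : μ f < μs (q * φ) := by
      rw [hsm, ← hfq, hμm]
      exact lt_of_lt_of_le (WithTop.add_lt_add_left (hμnetop q hq0) hlt)
        (add_le_add_left (hle q) _)
    have h3 := hsa (f - q * φ) (q * φ)
    rw [sub_add_cancel] at h3
    exact lt_of_lt_of_le (lt_min h1 h2) h3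
  -- strict increase implies MuDvd
  have hlt_dvd : ∀ f : K[X], μ f < μs f → MuDvd μ φ f := by
    intro f hf
    have hft : μ f ≠ ⊤ := hf.ne_top
    have hf0 : f ≠ 0 := by rintro rfl; exact hft hμzero
    obtain ⟨N, a, ha, hfe⟩ := hexp f
    rcases N with _ | M
    · rw [Finset.range_zero, Finset.sum_empty] at hfe
      exact absurd hfe hf0
    have hfg : f = φ * (∑ s ∈ Finset.range M, a (s + 1) * φ ^ s) + a 0 := by
      rw [hfe]; exact hsplit M a
    set g := ∑ s ∈ Finset.range M, a (s + 1) * φ ^ s with hgdef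
    have hfval : μ f = (Finset.range (M + 1)).inf fun s => μ (a s) + s • μ φ := by
      rw [hfe]; exact hExp (M + 1) a ha
    by_cases hA : μ f < μ (a 0)
    · refine ⟨g, ?_⟩
      show μ f < μ (f - g * φ)
      have e : f - g * φ = a 0 := by rw [hfg]; ring
      rw [e]; exact hA
    · exfalso
      push_neg at hA
      have hA' : μ f = μ (a 0) := by
        refine le_antisymm ?_ hA
        calc μ f ≤ μ (a 0) + (0 : ℕ) • μ φ := hfval ▸ Finset.inf_le (by simp)
          _ = μ (a 0) := by rw [zero_nsmul, add_zero]
      have hgval : μ g = (Finset.range M).inf fun s => μ (a (s + 1)) + s • μ φ :=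
        hExp M _ (fun s => ha (s + 1))
      have hkey : μ f < μs (φ * g) := by
        rw [hsm]
        refine lt_of_lt_of_le ?_ (add_le_add_right (hle g) (μs φ))
        rw [hgval, aux_add_inf]
        rcases Nat.eq_zero_or_pos M with rfl | hM
        · rw [Finset.range_zero, Finset.inf_empty]
          exact hft.lt_top
        obtain ⟨t, htmem, hte⟩ := Finset.exists_mem_eq_inf (Finset.range M)
          (Finset.nonempty_range_iff.mpr hM.ne')
          (fun s => μs φ + (μ (a (s + 1)) + s • μ φ))
        rw [hte]
        rcases eq_or_ne (μ (a (t + 1)) + t • μ φ) ⊤ with hX | hX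
        · rw [hX, add_top]
          exact hft.lt_top
        calc μ f ≤ μ (a (t + 1)) + (t + 1) • μ φ := by
              refine hfval ▸ Finset.inf_le ?_
              simp only [Finset.mem_range] at htmem ⊢
              omega
          _ = μ φ + (μ (a (t + 1)) + t • μ φ) := by
              rw [succ_nsmul]; abel
          _ < μs φ + (μ (a (t + 1)) + t • μ φ) := by
              rw [add_comm (μ φ) _, add_comm (μs φ) _]
              exact WithTop.add_lt_add_left hX hlt
      have hne2 : μs (φ * g) ≠ μs (a 0) := by
        rw [hsmall _ (ha 0), ← hA']
        exact hkey.ne'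
      have hμsf : μs f = min (μs (φ * g)) (μs (a 0)) := by
        rw [hfg]; exact hsmin _ _ hne2
      rw [hsmall _ (ha 0), ← hA', min_eq_right hkey.le] at hμsf
      rw [hμsf] at hf
      exact lt_irrefl _ hf
  -- the equivalence (c)
  have hiff : ∀ f : K[X], μ f = μs f ↔ ¬ MuDvd μ φ f := by
    intro f
    constructor
    · intro heq hdvd
      exact absurd heq (hdvd_lt f hdvd).ne
    · intro hnd
      by_contra hne''
      exact hnd (hlt_dvd f (lt_of_le_of_ne (hle f) hne''))
  -- irreducibility
  have hirr : MuIrred μ φ := by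
    refine ⟨hφ0, hminimal 1 one_ne_zero (by rw [Polynomial.degree_one]; exact hφdpos), ?_⟩
    intro g h hgh
    by_contra hcon
    push_neg at hcon
    obtain ⟨h1, h2⟩ := hcon
    have e1 : μ g = μs g := (hiff g).mpr h1
    have e2 : μ h = μs h := (hiff h).mpr h2
    have e3 : μ (g * h) = μs (g * h) := by rw [hμm, hsm, e1, e2]
    exact absurd e3 (hdvd_lt _ hgh).ne
  exact ⟨⟨hmon, hminimal, hirr⟩, hlemu', hnemu', hμ'le, hiff⟩
end

section
/- Let (K,v) be a valued field and let μ* be a semivaluation on K[x] extending v, with values in a linearly ordered abelian group Λ (plus ∞). Let η and η' be valuations on K[x] extending v, with values in Λ ∪ {∞}, such that η ≤ μ*, η ≠ μ*, η' ≤ μ*, and η' ≠ μ*. Then η ≤ η' or η' ≤ η; that is, the open interval below μ* in the partially ordered set of Λ-valued valuations on K[x] extending v is totally ordered. -/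
open Polynomial

section Helpers

variable {K : Type*} [Field K] {Λ : Type*} [AddCommGroup Λ] [LinearOrder Λ] [IsOrderedAddMonoid Λ]

lemma val_one_aux {v : K → WithTop Λ} (hv : IsVal v) : v 1 = 0 := by
  have h := hv.1 1 1
  rw [one_mul] at h
  have hne : v 1 ≠ ⊤ := fun ht => one_ne_zero ((hv.2.2 1).mp ht)
  lift v 1 to Λ using hne with a ha
  have h' : a = a + a := by exact_mod_cast h
  have : a = 0 := (left_eq_add.mp h')
  exact_mod_cast this

variable {w : K[X] → WithTop Λ}

lemma wneg (hmul : ∀ f g, w (f * g) = w f + w g) (hone : w 1 = 0) (f : K[X]) :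
    w (-f) = w f := by
  have hm1 : w (-1 : K[X]) = 0 := by
    have h := hmul (-1) (-1)
    rw [neg_one_mul, neg_neg, hone] at h
    rcases eq_or_ne (w (-1 : K[X])) ⊤ with ht | ht
    · rw [ht, top_add] at h; simp at h
    · lift w (-1 : K[X]) to Λ using ht with a ha
      have h' : a + a = 0 := by exact_mod_cast h.symm
      have : a = 0 := by
        rcases lt_trichotomy a 0 with hlt | he | hgt
        · have := add_lt_add hlt hlt; rw [h', add_zero] at this
          exact absurd this (lt_irrefl 0)
        · exact he
        · have := add_lt_add hgt hgt; rw [h', add_zero] at this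
          exact absurd this (lt_irrefl 0)
      exact_mod_cast this
  calc w (-f) = w ((-1) * f) := by rw [neg_one_mul]
    _ = w (-1 : K[X]) + w f := hmul _ _
    _ = w f := by rw [hm1, zero_add]

lemma wadd_eq (hmul : ∀ f g, w (f * g) = w f + w g)
    (hadd : ∀ f g, min (w f) (w g) ≤ w (f + g)) (hone : w 1 = 0)
    {f g : K[X]} (h : w f < w g) : w (f + g) = w f := by
  refine le_antisymm ?_ ?_
  · by_contra hc
    push_neg at hc
    have h2 : min (w (f + g)) (w g) ≤ w f := by
      have h3 := hadd (f + g) (-g)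
      rw [add_neg_cancel_right, wneg hmul hone] at h3
      exact h3
    rcases min_le_iff.mp h2 with h' | h'
    · exact absurd h' (not_le.mpr hc)
    · exact absurd h' (not_le.mpr h)
  · have := hadd f g
    rwa [min_eq_left h.le] at this

/-- Key computational lemma: if `η ≤ μs`, `η φ < μs φ` and `η r = μs r`, then for
`f = φ*q + r` there is no cancellation: `η f ≤ min (η r) (η φ + η q)`. -/
lemma M1 {η μs : K[X] → WithTop Λ}
    (hmulη : ∀ f g, η (f * g) = η f + η g)
    (haddη : ∀ f g, min (η f) (η g) ≤ η (f + g))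
    (honeη : η 1 = 0)
    (hmulμ : ∀ f g, μs (f * g) = μs f + μs g)
    (haddμ : ∀ f g, min (μs f) (μs g) ≤ μs (f + g))
    (honeμ : μs 1 = 0)
    (h1 : ∀ f, η f ≤ μs f)
    {φ q r f : K[X]} (hf : f = φ * q + r)
    (hφ : η φ < μs φ) (hr : η r = μs r) :
    η f ≤ min (η r) (η φ + η q) := by
  by_contra hc
  push_neg at hc
  have hBeq : η (φ * q) = η φ + η q := hmulη φ q
  have hAB : η r = η φ + η q := by
    by_contra hne
    have heq : η f = min (η r) (η φ + η q) := by
      rcases lt_or_gt_of_ne hne with h | h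
      · rw [min_eq_left h.le, hf, show φ * q + r = r + φ * q by ring]
        exact wadd_eq hmulη haddη honeη (by rw [hBeq]; exact h)
      · rw [min_eq_right h.le, ← hBeq, hf]
        exact wadd_eq hmulη haddη honeη (by rw [hBeq]; exact h)
    rw [heq] at hc
    exact absurd hc (lt_irrefl _)
  have hm : η r < η f := by
    have h5 := hc
    rw [← hAB, min_self] at h5
    exact h5
  have hμf : η r < μs f := lt_of_lt_of_le hm (h1 f)
  have hrsub : min (μs f) (μs (φ * q)) ≤ μs r := by
    have h6 := haddμ f (-(φ * q))
    rw [wneg hmulμ honeμ, show f + -(φ * q) = r by rw [hf]; ring] at h6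
    exact h6
  rw [← hr] at hrsub
  have h3 : μs φ + μs q ≤ η r := by
    rcases min_le_iff.mp hrsub with h' | h'
    · exact absurd h' (not_le.mpr hμf)
    · rw [← hmulμ]; exact h'
  have hqne : η q ≠ ⊤ := by
    intro ht
    rw [hAB, ht, add_top] at hm
    exact absurd hm not_top_lt
  have hlt : η r < μs φ + μs q := by
    rw [hAB]
    calc η φ + η q < μs φ + η q := WithTop.add_lt_add_right hqne hφ
      _ ≤ μs φ + μs q := add_le_add_right (h1 q) _
  exact absurd (lt_of_lt_of_le hlt h3) (lt_irrefl _)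

/-- Main induction: comparison of two valuations below `μs` given a common minimal-degree
witness `φ`. -/
lemma KEY {v : K → WithTop Λ} (hv : IsVal v) {μs η η' : K[X] → WithTop Λ}
    (hμs : IsSemivalExt v μs) (hη : IsValExt v η) (hη' : IsValExt v η')
    (h1 : ∀ f, η f ≤ μs f)
    {φ : K[X]} (hmon : φ.Monic) (hφ : η φ < μs φ)
    (hlow : ∀ g : K[X], g.natDegree < φ.natDegree → η g = μs g ∧ η' g = μs g)
    (hγ : η φ ≤ η' φ) :
    ∀ f, η f ≤ η' f := by
  have hv1 : v 1 = 0 := val_one_aux hv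
  have honeη : η 1 = 0 := by rw [← C_1, hη.2.2.2, hv1]
  have honeμ : μs 1 = 0 := by rw [← C_1, hμs.2.2.2, hv1]
  have hd1 : 0 < φ.natDegree := by
    by_contra h
    push_neg at h
    have hone : φ = 1 := hmon.natDegree_eq_zero.mp (Nat.le_zero.mp h)
    rw [hone, honeη, honeμ] at hφ
    exact absurd hφ (lt_irrefl _)
  have hφ0 : φ ≠ 0 := hmon.ne_zero
  have hd1deg : 0 < φ.degree := natDegree_pos_iff_degree_pos.mp hd1
  have main : ∀ n : ℕ, ∀ f : K[X], f.natDegree ≤ n → η f ≤ η' f := by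
    intro n
    induction n with
    | zero =>
      intro f hf
      have h := hlow f (lt_of_le_of_lt (Nat.le_zero.mp hf).le hd1)
      rw [h.1, h.2]
    | succ n ih =>
      intro f hf
      by_cases hcase : f.natDegree < φ.natDegree
      · have h := hlow f hcase
        rw [h.1, h.2]
      · push_neg at hcase
        have hf0 : f ≠ 0 := by
          intro h
          rw [h, natDegree_zero] at hcase
          omega
        set q := f /ₘ φ with hq
        set r := f %ₘ φ with hr
        have hdecomp : r + φ * q = f := modByMonic_add_div f φ
        have hrdeg : r.natDegree < φ.natDegree := by
          rcases eq_or_ne r 0 with h | h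
          · rw [h, natDegree_zero]; exact hd1
          · exact natDegree_lt_natDegree h (degree_modByMonic_lt f hmon)
        have hqdeg : q.natDegree ≤ n := by
          rcases eq_or_ne q 0 with h | h
          · rw [h, natDegree_zero]; omega
          · have hlt := natDegree_lt_natDegree h (degree_divByMonic_lt f φ hf0 hd1deg)
            omega
        have ihq := ih q hqdeg
        have e4 : η f ≤ min (η r) (η φ + η q) :=
          M1 hη.1 hη.2.1 honeη hμs.1 hμs.2.1 honeμ h1
            (by rw [← hdecomp]; ring) hφ (hlow r hrdeg).1
        have e3 : η r ≤ η' r := le_of_eq ((hlow r hrdeg).1.trans (hlow r hrdeg).2.symm)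
        have e2 : η φ + η q ≤ η' (φ * q) := by
          rw [hη'.1]
          exact add_le_add hγ ihq
        have e1 : min (η' r) (η' (φ * q)) ≤ η' f := by
          calc min (η' r) (η' (φ * q)) ≤ η' (r + φ * q) := hη'.2.1 r (φ * q)
            _ = η' f := by rw [hdecomp]
        calc η f ≤ min (η r) (η φ + η q) := e4
          _ ≤ min (η' r) (η' (φ * q)) := min_le_min e3 e2
          _ ≤ η' f := e1
  exact fun f => main f.natDegree f le_rfl

lemma auxmain {v : K → WithTop Λ} (hv : IsVal v) {μs η η' : K[X] → WithTop Λ}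
    (hμs : IsSemivalExt v μs) (hη : IsValExt v η) (hη' : IsValExt v η')
    (h1 : ∀ f, η f ≤ μs f) (h3 : ∀ f, η' f ≤ μs f)
    {d d' : ℕ}
    (hd : ∃ f : K[X], f.natDegree = d ∧ η f < μs f)
    (hmind : ∀ f : K[X], η f < μs f → d ≤ f.natDegree)
    (hmind' : ∀ f : K[X], η' f < μs f → d' ≤ f.natDegree)
    (hdd : d ≤ d') :
    (∀ f, η f ≤ η' f) ∨ (∀ f, η' f ≤ η f) := by
  obtain ⟨φ₀, hφ₀d, hφ₀⟩ := hd
  have hφ₀0 : φ₀ ≠ 0 := by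
    intro h
    rw [h, (hη.2.2.1 0).mpr rfl, hμs.2.2.1] at hφ₀
    exact absurd hφ₀ (lt_irrefl _)
  set c := (leadingCoeff φ₀)⁻¹ with hc
  have hcne : c ≠ 0 := inv_ne_zero (leadingCoeff_ne_zero.mpr hφ₀0)
  have hvc : v c ≠ ⊤ := fun ht => hcne ((hv.2.2 c).mp ht)
  set φ := φ₀ * C c with hφdef
  have hmon : φ.Monic := monic_mul_leadingCoeff_inv hφ₀0
  have hφlt : η φ < μs φ := by
    rw [hφdef, hη.1, hμs.1, hη.2.2.2, hμs.2.2.2]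
    exact WithTop.add_lt_add_right hvc hφ₀
  have hφd : φ.natDegree = d := by
    rw [← hφ₀d]
    exact natDegree_eq_of_degree_eq (degree_mul_leadingCoeff_inv φ₀ hφ₀0)
  have hlow : ∀ g : K[X], g.natDegree < φ.natDegree → η g = μs g ∧ η' g = μs g := by
    intro g hg
    rw [hφd] at hg
    constructor
    · have hnl : ¬ η g < μs g := fun h => absurd (hmind g h) (not_le.mpr hg)
      exact le_antisymm (h1 g) (not_lt.mp hnl)
    · have hnl : ¬ η' g < μs g := fun h => absurd (hmind' g h) (by omega)
      exact le_antisymm (h3 g) (not_lt.mp hnl)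
  by_cases hc2 : η' φ < μs φ
  · rcases le_total (η φ) (η' φ) with h | h
    · exact Or.inl (KEY hv hμs hη hη' h1 hmon hφlt hlow h)
    · exact Or.inr (KEY hv hμs hη' hη h3 hmon hc2
        (fun g hg => ⟨(hlow g hg).2, (hlow g hg).1⟩) h)
  · refine Or.inl (KEY hv hμs hη hη' h1 hmon hφlt hlow ?_)
    have heq : η' φ = μs φ := le_antisymm (h3 φ) (not_lt.mp hc2)
    rw [heq]
    exact le_of_lt hφlt

end Helpers



/-- The set of valuations lying strictly below a semivaluation `μ*`
is totally ordered. -/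
theorem statement_7 {K : Type*} [Field K] {Λ : Type*} [AddCommGroup Λ] [LinearOrder Λ] [IsOrderedAddMonoid Λ]
    (v : K → WithTop Λ) (hv : IsVal v)
    (μs : K[X] → WithTop Λ) (hμs : IsSemivalExt v μs)
    (η η' : K[X] → WithTop Λ) (hη : IsValExt v η) (hη' : IsValExt v η')
    (h1 : ∀ f : K[X], η f ≤ μs f) (h2 : η ≠ μs)
    (h3 : ∀ f : K[X], η' f ≤ μs f) (h4 : η' ≠ μs) :
    (∀ f : K[X], η f ≤ η' f) ∨ (∀ f : K[X], η' f ≤ η f) := by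
  classical
  have hex : ∃ f : K[X], η f < μs f := by
    by_contra h
    push_neg at h
    exact h2 (funext fun f => le_antisymm (h1 f) (h f))
  have hex' : ∃ f : K[X], η' f < μs f := by
    by_contra h
    push_neg at h
    exact h4 (funext fun f => le_antisymm (h3 f) (h f))
  have hexd : ∃ n : ℕ, ∃ f : K[X], f.natDegree = n ∧ η f < μs f := by
    obtain ⟨f, hf⟩ := hex
    exact ⟨f.natDegree, f, rfl, hf⟩
  have hexd' : ∃ n : ℕ, ∃ f : K[X], f.natDegree = n ∧ η' f < μs f := by
    obtain ⟨f, hf⟩ := hex'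
    exact ⟨f.natDegree, f, rfl, hf⟩
  have hd := Nat.find_spec hexd
  have hd' := Nat.find_spec hexd'
  have hmind : ∀ f : K[X], η f < μs f → Nat.find hexd ≤ f.natDegree :=
    fun f hf => Nat.find_min' hexd ⟨f, rfl, hf⟩
  have hmind' : ∀ f : K[X], η' f < μs f → Nat.find hexd' ≤ f.natDegree :=
    fun f hf => Nat.find_min' hexd' ⟨f, rfl, hf⟩
  rcases le_total (Nat.find hexd) (Nat.find hexd') with h | h
  · exact auxmain hv hμs hη hη' h1 h3 hd hmind hmind' h
  · exact (auxmain hv hμs hη' hη h3 h1 hd' hmind' hmind h).symm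
end
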